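/- arXiv:1711.02394 — 3 statements merged into one kernel-verified Lean document; each statement's English description precedes it below -/
import Mathlib

section
/- Let G be a connected graph with a cut edge u₁u₂ such that both endpoints have degree at least 2 in G, with G₁ and G₂ the components of G − u₁u₂ containing u₁ and u₂ respectively. Let G' be the graph obtained from G by contracting the edge u₁u₂ and attaching a pendant edge at the contracted vertex (equivalently, G' is obtained from G₁ and G₂ by identifying u₁ with u₂ and attaching one pendant vertex to the identified vertex). Then Sz_e(G') < Sz_e(G) and Sz_ev(G') < Sz_ev(G). -/
open SimpleGraph Finset
open scoped Classical

noncomputable section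

variable {V : Type*}

/-- number of vertices strictly closer to `u` than to `v` -/
def szN (G : SimpleGraph V) (u v : V) : ℕ :=
  {w : V | G.dist u w < G.dist v w}.ncard

/-- distance from an edge (unordered pair) to a vertex -/
def eDist (G : SimpleGraph V) (e : Sym2 V) (w : V) : ℕ :=
  Sym2.lift ⟨fun x y => min (G.dist x w) (G.dist y w), fun x y => min_comm _ _⟩ e

/-- number of edges strictly closer to `u` than to `v` -/
def szM (G : SimpleGraph V) (u v : V) : ℕ :=
  {e : Sym2 V | e ∈ G.edgeSet ∧ eDist G e u < eDist G e v}.ncard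

/-- edge Szeged index -/
def szE [Fintype V] (G : SimpleGraph V) : ℕ :=
  ∑ e ∈ G.edgeFinset,
    Sym2.lift ⟨fun u v => szM G u v * szM G v u, fun u v => mul_comm _ _⟩ e

/-- edge-vertex Szeged index -/
def szEV [Fintype V] (G : SimpleGraph V) : ℚ :=
  (1/2) * ∑ e ∈ G.edgeFinset,
    Sym2.lift ⟨fun u v => ((szN G u v * szM G v u + szN G v u * szM G u v : ℕ) : ℚ),
      fun u v => by push_cast; ring⟩ e

/-- the graph with a cut edge `u₁u₂` whose two components after deleting the cut
edge are `G₁` (containing `u₁`) and `G₂` (containing `u₂`) -/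
def bridgeGraph {V₁ V₂ : Type*} (G₁ : SimpleGraph V₁) (G₂ : SimpleGraph V₂)
    (u₁ : V₁) (u₂ : V₂) : SimpleGraph (V₁ ⊕ V₂) where
  Adj a b :=
    match a, b with
    | Sum.inl x, Sum.inl y => G₁.Adj x y
    | Sum.inl x, Sum.inr y => x = u₁ ∧ y = u₂
    | Sum.inr x, Sum.inl y => x = u₂ ∧ y = u₁
    | Sum.inr x, Sum.inr y => G₂.Adj x y
  symm := by
    constructor
    rintro (x | x) (y | y) h
    · exact h.symm
    · exact ⟨h.2, h.1⟩
    · exact ⟨h.2, h.1⟩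
    · exact h.symm
  loopless := by
    constructor
    rintro (x | x) h
    · exact G₁.irrefl h
    · exact G₂.irrefl h

/-- the graph obtained from `bridgeGraph G₁ G₂ u₁ u₂` by contracting the cut edge
`u₁u₂` (identifying `u₂` with `u₁`, here represented by `Sum.inl u₁`) and
attaching a pendant edge (to the pendant vertex `Sum.inr u₂`) at the contracted
vertex -/
def contractBridge {V₁ V₂ : Type*} (G₁ : SimpleGraph V₁) (G₂ : SimpleGraph V₂)
    (u₁ : V₁) (u₂ : V₂) : SimpleGraph (V₁ ⊕ V₂) where
  Adj a b :=
    match a, b with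
    | Sum.inl x, Sum.inl y => G₁.Adj x y
    | Sum.inl x, Sum.inr y => x = u₁ ∧ (y = u₂ ∨ G₂.Adj u₂ y)
    | Sum.inr x, Sum.inl y => y = u₁ ∧ (x = u₂ ∨ G₂.Adj u₂ x)
    | Sum.inr x, Sum.inr y => x ≠ u₂ ∧ y ≠ u₂ ∧ G₂.Adj x y
  symm := by
    constructor
    rintro (x | x) (y | y) h
    · exact h.symm
    · exact h
    · exact h
    · exact ⟨h.2.1, h.1, h.2.2.symm⟩
  loopless := by
    constructor
    rintro (x | x) h
    · exact G₁.irrefl h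
    · exact G₂.irrefl h.2.2

namespace SzCut

variable {V₁ V₂ : Type*} (G₁ : SimpleGraph V₁) (G₂ : SimpleGraph V₂) (u₁ : V₁) (u₂ : V₂)

/-- distance function for the bridge graph -/
def fB (a b : V₁ ⊕ V₂) : ℕ :=
  match a, b with
  | .inl x, .inl y => G₁.dist x y
  | .inl x, .inr b => G₁.dist x u₁ + 1 + G₂.dist u₂ b
  | .inr a, .inl y => G₂.dist a u₂ + 1 + G₁.dist u₁ y
  | .inr a, .inr b => G₂.dist a b

/-- distance function for the contracted graph -/
def fC (a b : V₁ ⊕ V₂) : ℕ :=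
  match a, b with
  | .inl x, .inl y => G₁.dist x y
  | .inl x, .inr b => G₁.dist x u₁ + (if b = u₂ then 1 else G₂.dist u₂ b)
  | .inr a, .inl y => (if a = u₂ then 1 else G₂.dist a u₂) + G₁.dist u₁ y
  | .inr a, .inr b =>
      if a = u₂ then (if b = u₂ then 0 else 1 + G₂.dist u₂ b)
      else if b = u₂ then G₂.dist a u₂ + 1 else G₂.dist a b

lemma fB_self (a : V₁ ⊕ V₂) : fB G₁ G₂ u₁ u₂ a a = 0 := by
  obtain (x | x) := a <;> simp [fB, SimpleGraph.dist_self]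

lemma dist_le_adj {V : Type*} {G : SimpleGraph V} (h : G.Connected) {x x' : V}
    (hadj : G.Adj x x') (y : V) : G.dist x y ≤ G.dist x' y + 1 := by
  have h1 := h.dist_triangle (u := x) (v := x') (w := y)
  have h2 : G.dist x x' ≤ 1 := by
    simpa using SimpleGraph.dist_le (SimpleGraph.Walk.cons hadj SimpleGraph.Walk.nil)
  omega

lemma dist_hom_le {V W : Type*} {G : SimpleGraph V} {G' : SimpleGraph W}
    (h : G.Connected) (f : G →g G') (u v : V) : G'.dist (f u) (f v) ≤ G.dist u v := by
  obtain ⟨p, hp⟩ := h.exists_walk_length_eq_dist u v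
  simpa [hp] using SimpleGraph.dist_le (p.map f)

/-- inclusion of `G₁` into the bridge graph -/
def homB₁ : G₁ →g bridgeGraph G₁ G₂ u₁ u₂ := ⟨Sum.inl, fun h => h⟩

/-- inclusion of `G₂` into the bridge graph -/
def homB₂ : G₂ →g bridgeGraph G₁ G₂ u₁ u₂ := ⟨Sum.inr, fun h => h⟩

variable (h₁ : G₁.Connected) (h₂ : G₂.Connected)
  (hG : (bridgeGraph G₁ G₂ u₁ u₂).Connected)

lemma adjB_bridge : (bridgeGraph G₁ G₂ u₁ u₂).Adj (Sum.inl u₁) (Sum.inr u₂) := ⟨rfl, rfl⟩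

include h₁ h₂ hG in
lemma distB_le (a b : V₁ ⊕ V₂) :
    (bridgeGraph G₁ G₂ u₁ u₂).dist a b ≤ fB G₁ G₂ u₁ u₂ a b := by
  have hb1 : (bridgeGraph G₁ G₂ u₁ u₂).dist (Sum.inl u₁) (Sum.inr u₂) ≤ 1 := by
    simpa using SimpleGraph.dist_le
      (SimpleGraph.Walk.cons (adjB_bridge G₁ G₂ u₁ u₂) SimpleGraph.Walk.nil)
  obtain (x | x) := a <;> obtain (y | y) := b
  · exact dist_hom_le h₁ (homB₁ G₁ G₂ u₁ u₂) x y
  · have t1 := hG.dist_triangle (u := Sum.inl x) (v := Sum.inl u₁) (w := Sum.inr y)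
    have t2 := hG.dist_triangle (u := Sum.inl u₁) (v := Sum.inr u₂) (w := Sum.inr y)
    have l1 : (bridgeGraph G₁ G₂ u₁ u₂).dist (Sum.inl x) (Sum.inl u₁) ≤ G₁.dist x u₁ :=
      by exact dist_hom_le h₁ (homB₁ G₁ G₂ u₁ u₂) x u₁
    have l2 : (bridgeGraph G₁ G₂ u₁ u₂).dist (Sum.inr u₂) (Sum.inr y) ≤ G₂.dist u₂ y :=
      by exact dist_hom_le h₂ (homB₂ G₁ G₂ u₁ u₂) u₂ y
    simp only [fB]; omega
  · have t1 := hG.dist_triangle (u := Sum.inr x) (v := Sum.inr u₂) (w := Sum.inl y)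
    have t2 := hG.dist_triangle (u := Sum.inr u₂) (v := Sum.inl u₁) (w := Sum.inl y)
    have l1 : (bridgeGraph G₁ G₂ u₁ u₂).dist (Sum.inr x) (Sum.inr u₂) ≤ G₂.dist x u₂ :=
      by exact dist_hom_le h₂ (homB₂ G₁ G₂ u₁ u₂) x u₂
    have l2 : (bridgeGraph G₁ G₂ u₁ u₂).dist (Sum.inl u₁) (Sum.inl y) ≤ G₁.dist u₁ y :=
      by exact dist_hom_le h₁ (homB₁ G₁ G₂ u₁ u₂) u₁ y
    have hb2 : (bridgeGraph G₁ G₂ u₁ u₂).dist (Sum.inr u₂) (Sum.inl u₁) ≤ 1 := by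
      rw [SimpleGraph.dist_comm]; exact hb1
    simp only [fB]; omega
  · exact dist_hom_le h₂ (homB₂ G₁ G₂ u₁ u₂) x y

include h₁ h₂ in
lemma fB_le_adj {a c : V₁ ⊕ V₂} (h : (bridgeGraph G₁ G₂ u₁ u₂).Adj a c) (b : V₁ ⊕ V₂) :
    fB G₁ G₂ u₁ u₂ a b ≤ fB G₁ G₂ u₁ u₂ c b + 1 := by
  obtain (x | x) := a <;> obtain (y | y) := c
  · have hadj : G₁.Adj x y := h
    obtain (z | z) := b
    · simpa [fB] using dist_le_adj h₁ hadj z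
    · have := dist_le_adj h₁ hadj u₁
      simp only [fB]; omega
  · obtain ⟨rfl, rfl⟩ := h
    obtain (z | z) := b <;> simp only [fB] <;>
      simp [SimpleGraph.dist_self] <;> omega
  · obtain ⟨rfl, rfl⟩ := h
    obtain (z | z) := b <;> simp only [fB] <;>
      simp [SimpleGraph.dist_self] <;> omega
  · have hadj : G₂.Adj x y := h
    obtain (z | z) := b
    · have := dist_le_adj h₂ (hadj.symm) (u₂)
      simp only [fB]
      have : G₂.dist x u₂ ≤ G₂.dist y u₂ + 1 := dist_le_adj h₂ hadj u₂
      omega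
    · simpa [fB] using dist_le_adj h₂ hadj z

include h₁ h₂ in
lemma fB_le_length {a b : V₁ ⊕ V₂} (p : (bridgeGraph G₁ G₂ u₁ u₂).Walk a b) :
    fB G₁ G₂ u₁ u₂ a b ≤ p.length := by
  induction p with
  | nil => simp [fB_self]
  | @cons a' c' b' h q ih =>
      have := fB_le_adj G₁ G₂ u₁ u₂ h₁ h₂ h b'
      simp only [SimpleGraph.Walk.length_cons]
      omega

include h₁ h₂ hG in
lemma distB_eq (a b : V₁ ⊕ V₂) :
    (bridgeGraph G₁ G₂ u₁ u₂).dist a b = fB G₁ G₂ u₁ u₂ a b := by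
  refine le_antisymm (distB_le G₁ G₂ u₁ u₂ h₁ h₂ hG a b) ?_
  obtain ⟨p, hp⟩ := hG.exists_walk_length_eq_dist a b
  rw [← hp]
  exact fB_le_length G₁ G₂ u₁ u₂ h₁ h₂ p

end SzCut
namespace SzCut

variable {V₁ V₂ : Type*} (G₁ : SimpleGraph V₁) (G₂ : SimpleGraph V₂) (u₁ : V₁) (u₂ : V₂)

/-- embedding of `V₂` into the contracted graph -/
def ι : V₂ → V₁ ⊕ V₂ := fun a => if a = u₂ then Sum.inl u₁ else Sum.inr a

/-- inclusion of `G₁` into the contracted graph -/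
def homC₁ : G₁ →g contractBridge G₁ G₂ u₁ u₂ := ⟨Sum.inl, fun h => h⟩

/-- inclusion of `G₂` into the contracted graph -/
def homC₂ : G₂ →g contractBridge G₁ G₂ u₁ u₂ := by
  refine ⟨ι u₁ u₂, ?_⟩
  intro a b hab
  have hne : a ≠ b := hab.ne
  by_cases ha : a = u₂ <;> by_cases hb : b = u₂ <;>
    simp only [ι, ha, hb, ite_true, ite_false, if_pos, if_neg]
  · exact absurd (ha ▸ hb ▸ hne) (fun h => h rfl)
  · exact ⟨rfl, Or.inr (ha ▸ hab)⟩
  · exact ⟨rfl, Or.inr (hb ▸ hab.symm)⟩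
  · exact ⟨ha, hb, hab⟩

lemma homC₂_apply (a : V₂) : (homC₂ G₁ G₂ u₁ u₂) a = ι u₁ u₂ a := rfl

lemma adjC_pendant : (contractBridge G₁ G₂ u₁ u₂).Adj (Sum.inl u₁) (Sum.inr u₂) :=
  ⟨rfl, Or.inl rfl⟩

lemma fC_self (a : V₁ ⊕ V₂) : fC G₁ G₂ u₁ u₂ a a = 0 := by
  obtain (x | x) := a
  · simp [fC, SimpleGraph.dist_self]
  · by_cases hx : x = u₂ <;> simp [fC, hx, SimpleGraph.dist_self]

variable (h₁ : G₁.Connected) (h₂ : G₂.Connected)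

include h₁ h₂ in
lemma connC : (contractBridge G₁ G₂ u₁ u₂).Connected := by
  have key : ∀ v, (contractBridge G₁ G₂ u₁ u₂).Reachable (Sum.inl u₁) v := by
    intro v
    obtain (x | a) := v
    · exact (h₁.preconnected u₁ x).map (homC₁ G₁ G₂ u₁ u₂)
    · by_cases ha : a = u₂
      · replace ha := ha.symm; subst ha; exact (adjC_pendant G₁ G₂ u₁ u₂).reachable
      · have hmap := (h₂.preconnected u₂ a).map (homC₂ G₁ G₂ u₁ u₂)
        have e1 : (homC₂ G₁ G₂ u₁ u₂) u₂ = Sum.inl u₁ := by simp [homC₂_apply, ι]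
        have e2 : (homC₂ G₁ G₂ u₁ u₂) a = Sum.inr a := by simp [homC₂_apply, ι, ha]
        rwa [e1, e2] at hmap
  rw [SimpleGraph.connected_iff]
  exact ⟨fun v w => (key v).symm.trans (key w), ⟨Sum.inl u₁⟩⟩

include h₁ h₂ in
lemma distC_le (a b : V₁ ⊕ V₂) :
    (contractBridge G₁ G₂ u₁ u₂).dist a b ≤ fC G₁ G₂ u₁ u₂ a b := by
  have hC := connC G₁ G₂ u₁ u₂ h₁ h₂
  have hpen : (contractBridge G₁ G₂ u₁ u₂).dist (Sum.inl u₁) (Sum.inr u₂) ≤ 1 := by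
    simpa using SimpleGraph.dist_le
      (SimpleGraph.Walk.cons (adjC_pendant G₁ G₂ u₁ u₂) SimpleGraph.Walk.nil)
  have hpen' : (contractBridge G₁ G₂ u₁ u₂).dist (Sum.inr u₂) (Sum.inl u₁) ≤ 1 := by
    rw [SimpleGraph.dist_comm]; exact hpen
  have l1 : ∀ x y : V₁, (contractBridge G₁ G₂ u₁ u₂).dist (Sum.inl x) (Sum.inl y)
      ≤ G₁.dist x y := fun x y => dist_hom_le h₁ (homC₁ G₁ G₂ u₁ u₂) x y
  have l2 : ∀ a b : V₂, (contractBridge G₁ G₂ u₁ u₂).dist (ι u₁ u₂ a) (ι u₁ u₂ b)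
      ≤ G₂.dist a b := fun a b => dist_hom_le h₂ (homC₂ G₁ G₂ u₁ u₂) a b
  obtain (x | x) := a <;> obtain (y | y) := b
  · simpa [fC] using l1 x y
  · simp only [fC]
    by_cases hy : y = u₂
    · replace hy := hy.symm; subst hy
      have t := hC.dist_triangle (u := Sum.inl x) (v := Sum.inl u₁) (w := Sum.inr u₂)
      have := l1 x u₁
      simp only [eq_self_iff_true, if_true, ite_true, if_pos rfl]
      omega
    · have t := hC.dist_triangle (u := Sum.inl x) (v := Sum.inl u₁) (w := Sum.inr y)
      have h2 := l2 u₂ y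
      simp [ι, hy] at h2
      have := l1 x u₁
      simp only [if_neg hy]
      omega
  · simp only [fC]
    by_cases hx : x = u₂
    · replace hx := hx.symm; subst hx
      have t := hC.dist_triangle (u := Sum.inr u₂) (v := Sum.inl u₁) (w := Sum.inl y)
      have := l1 u₁ y
      simp only [eq_self_iff_true, if_true, ite_true, if_pos rfl]
      omega
    · have t := hC.dist_triangle (u := Sum.inr x) (v := Sum.inl u₁) (w := Sum.inl y)
      have h2 := l2 x u₂
      simp [ι, hx] at h2
      have := l1 u₁ y
      have hcomm : G₂.dist x u₂ = G₂.dist u₂ x := SimpleGraph.dist_comm ..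
      have hcomm2 : (contractBridge G₁ G₂ u₁ u₂).dist (Sum.inr x) (Sum.inl u₁)
          = (contractBridge G₁ G₂ u₁ u₂).dist (Sum.inl u₁) (Sum.inr x) :=
        SimpleGraph.dist_comm ..
      simp only [if_neg hx]
      omega
  · simp only [fC]
    by_cases hx : x = u₂ <;> by_cases hy : y = u₂
    · replace hx := hx.symm; subst hx; subst hy; simp [SimpleGraph.dist_self]
    · replace hx := hx.symm; subst hx
      have t := hC.dist_triangle (u := Sum.inr u₂) (v := Sum.inl u₁) (w := Sum.inr y)
      have h2 := l2 u₂ y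
      simp [ι, hy] at h2
      simp only [eq_self_iff_true, if_true, ite_true, if_pos rfl, if_neg hy]
      omega
    · replace hy := hy.symm; subst hy
      have t := hC.dist_triangle (u := Sum.inr x) (v := Sum.inl u₁) (w := Sum.inr u₂)
      have h2 := l2 x u₂
      simp [ι, hx] at h2
      have hcomm : G₂.dist x u₂ = G₂.dist u₂ x := SimpleGraph.dist_comm ..
      have hcomm2 : (contractBridge G₁ G₂ u₁ u₂).dist (Sum.inr x) (Sum.inl u₁)
          = (contractBridge G₁ G₂ u₁ u₂).dist (Sum.inl u₁) (Sum.inr x) :=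
        SimpleGraph.dist_comm ..
      simp only [eq_self_iff_true, if_true, ite_true, if_pos rfl, if_neg hx]
      omega
    · have h2 := l2 x y
      simp only [ι, if_neg hx, if_neg hy] at h2
      simp only [if_neg hx, if_neg hy]
      omega

include h₂ in
lemma dist_adj_le_one {a b : V₂} (h : G₂.Adj a b) : G₂.dist a b ≤ 1 := by
  simpa using SimpleGraph.dist_le (SimpleGraph.Walk.cons h SimpleGraph.Walk.nil)

include h₁ h₂ in
lemma fC_le_adj {a c : V₁ ⊕ V₂} (h : (contractBridge G₁ G₂ u₁ u₂).Adj a c) (b : V₁ ⊕ V₂) :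
    fC G₁ G₂ u₁ u₂ a b ≤ fC G₁ G₂ u₁ u₂ c b + 1 := by
  obtain (x | x) := a <;> obtain (y | y) := c
  · -- G₁ edge
    have hadj : G₁.Adj x y := h
    obtain (z | z) := b
    · simpa [fC] using dist_le_adj h₁ hadj z
    · have := dist_le_adj h₁ hadj u₁
      simp only [fC]; split_ifs <;> omega
  · -- inl x ~ inr y : x = u₁ and (y = u₂ or Adj u₂ y)
    obtain ⟨rfl, hy⟩ := h
    obtain (hy0 | hy) := hy
    · replace hy0 := hy0.symm; subst hy0
      obtain (z | z) := b <;> simp only [fC]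
      · simp [SimpleGraph.dist_self]; omega
      · simp only [eq_self_iff_true, if_true, ite_true, if_pos rfl, SimpleGraph.dist_self]
        split_ifs <;> omega
    · have hy' : y ≠ u₂ := fun hh => G₂.irrefl (hh ▸ hy)
      obtain (z | z) := b <;> simp only [fC]
      · simp only [if_neg hy', SimpleGraph.dist_self]
        omega
      · simp only [if_neg hy', SimpleGraph.dist_self]
        by_cases hz : z = u₂
        · replace hz := hz.symm; subst hz; simp only [eq_self_iff_true, if_true, ite_true, if_pos rfl]; omega
        · simp only [if_neg hz]
          have := dist_le_adj h₂ hy z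
          omega
  · -- inr x ~ inl y : y = u₁ and (x = u₂ or Adj u₂ x)
    obtain ⟨rfl, hx⟩ := h
    obtain (hx0 | hx) := hx
    · replace hx0 := hx0.symm; subst hx0
      obtain (z | z) := b <;> simp only [fC]
      · simp only [eq_self_iff_true, if_true, ite_true, if_pos rfl]; omega
      · simp only [eq_self_iff_true, if_true, ite_true, if_pos rfl, SimpleGraph.dist_self]
        split_ifs <;> omega
    · have hx' : x ≠ u₂ := fun hh => G₂.irrefl (hh ▸ hx)
      have hle1 : G₂.dist x u₂ ≤ 1 := by
        have := dist_adj_le_one G₂ h₂ hx.symm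
        rwa [SimpleGraph.dist_comm] at this ⊢
      obtain (z | z) := b <;> simp only [fC]
      · simp only [if_neg hx', SimpleGraph.dist_self]
        omega
      · simp only [if_neg hx', SimpleGraph.dist_self]
        by_cases hz : z = u₂
        · replace hz := hz.symm; subst hz; simp only [eq_self_iff_true, if_true, ite_true, if_pos rfl]; omega
        · simp only [if_neg hz]
          have := dist_le_adj h₂ hx.symm z
          omega
  · -- inr x ~ inr y
    obtain ⟨hx, hy, hadj⟩ := h
    have hxy : G₂.dist x u₂ ≤ G₂.dist y u₂ + 1 := dist_le_adj h₂ hadj u₂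
    obtain (z | z) := b <;> simp only [fC, if_neg hx, if_neg hy]
    · omega
    · by_cases hz : z = u₂
      · replace hz := hz.symm; subst hz; simp only [eq_self_iff_true, if_true, ite_true, if_pos rfl]; omega
      · simp only [if_neg hz]
        have := dist_le_adj h₂ hadj z
        omega

include h₁ h₂ in
lemma fC_le_length {a b : V₁ ⊕ V₂} (p : (contractBridge G₁ G₂ u₁ u₂).Walk a b) :
    fC G₁ G₂ u₁ u₂ a b ≤ p.length := by
  induction p with
  | nil => simp [fC_self]
  | @cons a' c' b' h q ih =>
      have := fC_le_adj G₁ G₂ u₁ u₂ h₁ h₂ h b'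
      simp only [SimpleGraph.Walk.length_cons]
      omega

include h₁ h₂ in
lemma distC_eq (a b : V₁ ⊕ V₂) :
    (contractBridge G₁ G₂ u₁ u₂).dist a b = fC G₁ G₂ u₁ u₂ a b := by
  refine le_antisymm (distC_le G₁ G₂ u₁ u₂ h₁ h₂ a b) ?_
  obtain ⟨p, hp⟩ := (connC G₁ G₂ u₁ u₂ h₁ h₂).exists_walk_length_eq_dist a b
  rw [← hp]
  exact fC_le_length G₁ G₂ u₁ u₂ h₁ h₂ p

end SzCut
namespace SzCut

variable {V₁ V₂ : Type*} (G₁ : SimpleGraph V₁) (G₂ : SimpleGraph V₂) (u₁ : V₁) (u₂ : V₂)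

/-- the vertex map contracting the bridge -/
def σ : V₁ ⊕ V₂ → V₁ ⊕ V₂ := Sum.elim Sum.inl (ι u₁ u₂)

/-- the bridge edge (also the pendant edge of the contracted graph) -/
def bedge : Sym2 (V₁ ⊕ V₂) := s(Sum.inl u₁, Sum.inr u₂)

/-- the edge bijection -/
def φ (e : Sym2 (V₁ ⊕ V₂)) : Sym2 (V₁ ⊕ V₂) :=
  if e = bedge u₁ u₂ then e else e.map (σ u₁ u₂)

lemma σ_inl (x : V₁) : σ u₁ u₂ (Sum.inl x) = Sum.inl x := rfl

lemma σ_inr (a : V₂) : σ u₁ u₂ (Sum.inr a) = ι u₁ u₂ a := rfl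

lemma ι_ne_inr_u₂ (a : V₂) : ι u₁ u₂ a ≠ Sum.inr u₂ := by
  by_cases ha : a = u₂ <;> simp [ι, ha]

lemma σ_ne_inr_u₂ (v : V₁ ⊕ V₂) : σ u₁ u₂ v ≠ Sum.inr u₂ := by
  obtain (x | a) := v
  · simp [σ]
  · exact ι_ne_inr_u₂ u₁ u₂ a

lemma ι_inj {a b : V₂} (h : ι u₁ u₂ a = ι u₁ u₂ b) : a = b := by
  by_cases ha : a = u₂ <;> by_cases hb : b = u₂ <;>
    simp [ι, ha, hb] at h ⊢ <;> first | (rw [ha, hb]) | simp_all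

lemma phi_bedge : φ u₁ u₂ (bedge u₁ u₂) = bedge u₁ u₂ := if_pos rfl

lemma inl_pair_ne_bedge (x y : V₁) : s(Sum.inl x, Sum.inl y) ≠ bedge u₁ u₂ := by
  simp [bedge, Sym2.eq_iff]

lemma inr_pair_ne_bedge (a b : V₂) : s((Sum.inr a : V₁ ⊕ V₂), Sum.inr b) ≠ bedge u₁ u₂ := by
  simp [bedge, Sym2.eq_iff]

lemma phi_inl (x y : V₁) :
    φ u₁ u₂ (s(Sum.inl x, Sum.inl y)) = s((Sum.inl x : V₁ ⊕ V₂), Sum.inl y) := by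
  rw [φ, if_neg (inl_pair_ne_bedge u₁ u₂ x y), Sym2.map_pair_eq]; rfl

lemma phi_inr (a b : V₂) :
    φ u₁ u₂ (s(Sum.inr a, Sum.inr b)) = s(ι u₁ u₂ a, ι u₁ u₂ b) := by
  rw [φ, if_neg (inr_pair_ne_bedge u₁ u₂ a b), Sym2.map_pair_eq]; rfl

lemma B_edge_cases {e : Sym2 (V₁ ⊕ V₂)} (he : e ∈ (bridgeGraph G₁ G₂ u₁ u₂).edgeSet) :
    e = bedge u₁ u₂ ∨ (∃ x y, G₁.Adj x y ∧ e = s(Sum.inl x, Sum.inl y)) ∨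
      (∃ a b, G₂.Adj a b ∧ e = s(Sum.inr a, Sum.inr b)) := by
  induction e using Sym2.ind with
  | _ p q =>
    rw [SimpleGraph.mem_edgeSet] at he
    obtain (x | a) := p <;> obtain (y | b) := q
    · exact Or.inr (Or.inl ⟨x, y, he, rfl⟩)
    · obtain ⟨rfl, rfl⟩ := he; exact Or.inl rfl
    · obtain ⟨rfl, rfl⟩ := he; exact Or.inl (Sym2.eq_swap)
    · exact Or.inr (Or.inr ⟨a, b, he, rfl⟩)

lemma C_edge_cases {e : Sym2 (V₁ ⊕ V₂)} (he : e ∈ (contractBridge G₁ G₂ u₁ u₂).edgeSet) :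
    e = bedge u₁ u₂ ∨ (∃ x y, G₁.Adj x y ∧ e = s(Sum.inl x, Sum.inl y)) ∨
      (∃ b, G₂.Adj u₂ b ∧ e = s(Sum.inl u₁, Sum.inr b)) ∨
      (∃ a b, a ≠ u₂ ∧ b ≠ u₂ ∧ G₂.Adj a b ∧ e = s(Sum.inr a, Sum.inr b)) := by
  induction e using Sym2.ind with
  | _ p q =>
    rw [SimpleGraph.mem_edgeSet] at he
    obtain (x | a) := p <;> obtain (y | b) := q
    · exact Or.inr (Or.inl ⟨x, y, he, rfl⟩)
    · obtain ⟨rfl, (rfl | hb)⟩ := he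
      · exact Or.inl rfl
      · exact Or.inr (Or.inr (Or.inl ⟨b, hb, rfl⟩))
    · obtain ⟨rfl, (rfl | ha)⟩ := he
      · exact Or.inl (Sym2.eq_swap)
      · exact Or.inr (Or.inr (Or.inl ⟨a, ha, Sym2.eq_swap⟩))
    · exact Or.inr (Or.inr (Or.inr ⟨a, b, he.1, he.2.1, he.2.2, rfl⟩))

lemma phi_mem {e : Sym2 (V₁ ⊕ V₂)} (he : e ∈ (bridgeGraph G₁ G₂ u₁ u₂).edgeSet) :
    φ u₁ u₂ e ∈ (contractBridge G₁ G₂ u₁ u₂).edgeSet := by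
  rcases B_edge_cases G₁ G₂ u₁ u₂ he with rfl | ⟨x, y, hxy, rfl⟩ | ⟨a, b, hab, rfl⟩
  · rw [phi_bedge]; exact adjC_pendant G₁ G₂ u₁ u₂
  · rw [phi_inl]; exact hxy
  · rw [phi_inr]
    rw [SimpleGraph.mem_edgeSet]
    have := (homC₂ G₁ G₂ u₁ u₂).map_adj hab
    rwa [homC₂_apply, homC₂_apply] at this

lemma phi_ne_bedge {e : Sym2 (V₁ ⊕ V₂)} (he : e ∈ (bridgeGraph G₁ G₂ u₁ u₂).edgeSet)
    (hne : e ≠ bedge u₁ u₂) : φ u₁ u₂ e ≠ bedge u₁ u₂ := by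
  rcases B_edge_cases G₁ G₂ u₁ u₂ he with rfl | ⟨x, y, hxy, rfl⟩ | ⟨a, b, hab, rfl⟩
  · exact absurd rfl hne
  · rw [phi_inl]; exact inl_pair_ne_bedge u₁ u₂ x y
  · rw [phi_inr]
    intro hcon
    rw [bedge, Sym2.eq_iff] at hcon
    rcases hcon with ⟨h1, h2⟩ | ⟨h1, h2⟩
    · exact ι_ne_inr_u₂ u₁ u₂ b h2
    · exact ι_ne_inr_u₂ u₁ u₂ a h1

lemma phi_surjOn {e' : Sym2 (V₁ ⊕ V₂)} (he : e' ∈ (contractBridge G₁ G₂ u₁ u₂).edgeSet) :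
    ∃ e ∈ (bridgeGraph G₁ G₂ u₁ u₂).edgeSet, φ u₁ u₂ e = e' := by
  rcases C_edge_cases G₁ G₂ u₁ u₂ he with rfl | ⟨x, y, hxy, rfl⟩ | ⟨b, hb, rfl⟩ |
      ⟨a, b, ha, hb, hab, rfl⟩
  · exact ⟨bedge u₁ u₂, adjB_bridge G₁ G₂ u₁ u₂, phi_bedge u₁ u₂⟩
  · exact ⟨s(Sum.inl x, Sum.inl y), hxy, phi_inl u₁ u₂ x y⟩
  · refine ⟨s(Sum.inr u₂, Sum.inr b), hb, ?_⟩
    rw [phi_inr]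
    have hb' : b ≠ u₂ := fun hh => G₂.irrefl (hh ▸ hb)
    simp [ι, hb']
  · refine ⟨s(Sum.inr a, Sum.inr b), hab, ?_⟩
    rw [phi_inr]
    simp [ι, ha, hb]

lemma phi_injOn : Set.InjOn (φ u₁ u₂) (bridgeGraph G₁ G₂ u₁ u₂).edgeSet := by
  intro e he e' he' heq
  rcases B_edge_cases G₁ G₂ u₁ u₂ he with rfl | ⟨x, y, hxy, rfl⟩ | ⟨a, b, hab, rfl⟩ <;>
    rcases B_edge_cases G₁ G₂ u₁ u₂ he' with rfl | ⟨x', y', hxy', rfl⟩ | ⟨a', b', hab', rfl⟩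
  · rfl
  · rw [phi_bedge, phi_inl] at heq
    exact absurd heq.symm (inl_pair_ne_bedge u₁ u₂ x' y')
  · rw [phi_bedge, phi_inr] at heq
    exfalso
    rw [bedge, Sym2.eq_iff] at heq
    rcases heq with ⟨h1, h2⟩ | ⟨h1, h2⟩
    · exact ι_ne_inr_u₂ u₁ u₂ b' h2.symm
    · exact ι_ne_inr_u₂ u₁ u₂ a' h2.symm
  · rw [phi_bedge, phi_inl] at heq
    exact absurd heq (inl_pair_ne_bedge u₁ u₂ x y)
  · rwa [phi_inl, phi_inl] at heq
  · rw [phi_inl, phi_inr] at heq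
    exfalso
    have hne : a' ≠ b' := hab'.ne
    rw [Sym2.eq_iff] at heq
    by_cases ha : a' = u₂ <;> by_cases hb : b' = u₂ <;> simp [ι, ha, hb] at heq <;> simp_all
  · rw [phi_inr, phi_bedge] at heq
    exfalso
    rw [bedge, Sym2.eq_iff] at heq
    rcases heq with ⟨h1, h2⟩ | ⟨h1, h2⟩
    · exact ι_ne_inr_u₂ u₁ u₂ b h2
    · exact ι_ne_inr_u₂ u₁ u₂ a h1
  · rw [phi_inr, phi_inl] at heq
    exfalso
    have hne : a ≠ b := hab.ne
    rw [Sym2.eq_iff] at heq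
    by_cases ha : a = u₂ <;> by_cases hb : b = u₂ <;> simp [ι, ha, hb] at heq <;> simp_all
  · rw [phi_inr, phi_inr, Sym2.eq_iff] at heq
    rcases heq with ⟨h1, h2⟩ | ⟨h1, h2⟩
    · rw [ι_inj u₁ u₂ h1, ι_inj u₁ u₂ h2]
    · rw [ι_inj u₁ u₂ h1, ι_inj u₁ u₂ h2, Sym2.eq_swap]

lemma eDist_mk {V : Type*} (G : SimpleGraph V) (a b w : V) :
    eDist G s(a, b) w = min (G.dist a w) (G.dist b w) := by
  rw [eDist, Sym2.lift_mk]

end SzCut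
namespace SzCut

variable {V₁ V₂ : Type*} (G₁ : SimpleGraph V₁) (G₂ : SimpleGraph V₂) (u₁ : V₁) (u₂ : V₂)
variable (h₁ : G₁.Connected) (h₂ : G₂.Connected) (hG : (bridgeGraph G₁ G₂ u₁ u₂).Connected)

include h₁ h₂ hG in
lemma nIff₁ (x y : V₁) (w : V₁ ⊕ V₂) :
    ((bridgeGraph G₁ G₂ u₁ u₂).dist (Sum.inl x) w
        < (bridgeGraph G₁ G₂ u₁ u₂).dist (Sum.inl y) w)
      ↔ ((contractBridge G₁ G₂ u₁ u₂).dist (Sum.inl x) w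
        < (contractBridge G₁ G₂ u₁ u₂).dist (Sum.inl y) w) := by
  rw [distB_eq G₁ G₂ u₁ u₂ h₁ h₂ hG, distB_eq G₁ G₂ u₁ u₂ h₁ h₂ hG,
      distC_eq G₁ G₂ u₁ u₂ h₁ h₂, distC_eq G₁ G₂ u₁ u₂ h₁ h₂]
  obtain (z | c) := w
  · simp [fB, fC]
  · by_cases hc : c = u₂ <;>
      simp [fB, fC, hc, SimpleGraph.dist_self] <;> omega

include h₁ h₂ hG in
lemma nIff₂ (a b : V₂) (w : V₁ ⊕ V₂) :
    ((bridgeGraph G₁ G₂ u₁ u₂).dist (Sum.inr a) w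
        < (bridgeGraph G₁ G₂ u₁ u₂).dist (Sum.inr b) w)
      ↔ ((contractBridge G₁ G₂ u₁ u₂).dist (ι u₁ u₂ a) w
        < (contractBridge G₁ G₂ u₁ u₂).dist (ι u₁ u₂ b) w) := by
  rw [distB_eq G₁ G₂ u₁ u₂ h₁ h₂ hG, distB_eq G₁ G₂ u₁ u₂ h₁ h₂ hG,
      distC_eq G₁ G₂ u₁ u₂ h₁ h₂, distC_eq G₁ G₂ u₁ u₂ h₁ h₂]
  obtain (z | c) := w
  · by_cases ha : a = u₂ <;> by_cases hb : b = u₂ <;>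
      simp [fB, fC, ι, ha, hb, SimpleGraph.dist_self] <;> omega
  · by_cases ha : a = u₂ <;> by_cases hb : b = u₂ <;> by_cases hc : c = u₂ <;>
      simp [fB, fC, ι, ha, hb, hc, SimpleGraph.dist_self] <;> omega

include h₁ h₂ hG in
lemma eIff₁ (x y : V₁) {e : Sym2 (V₁ ⊕ V₂)} (he : e ∈ (bridgeGraph G₁ G₂ u₁ u₂).edgeSet) :
    (eDist (bridgeGraph G₁ G₂ u₁ u₂) e (Sum.inl x)
        < eDist (bridgeGraph G₁ G₂ u₁ u₂) e (Sum.inl y))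
      ↔ (eDist (contractBridge G₁ G₂ u₁ u₂) (φ u₁ u₂ e) (Sum.inl x)
        < eDist (contractBridge G₁ G₂ u₁ u₂) (φ u₁ u₂ e) (Sum.inl y)) := by
  rcases B_edge_cases G₁ G₂ u₁ u₂ he with rfl | ⟨p, q, hpq, rfl⟩ | ⟨a, b, hab, rfl⟩
  · rw [phi_bedge]
    simp only [bedge, eDist_mk, distB_eq G₁ G₂ u₁ u₂ h₁ h₂ hG, distC_eq G₁ G₂ u₁ u₂ h₁ h₂]
    simp [fB, fC, SimpleGraph.dist_self] <;> omega
  · rw [phi_inl]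
    simp only [eDist_mk, distB_eq G₁ G₂ u₁ u₂ h₁ h₂ hG, distC_eq G₁ G₂ u₁ u₂ h₁ h₂]
    simp [fB, fC]
  · rw [phi_inr]
    have hne : a ≠ b := hab.ne
    simp only [eDist_mk, distB_eq G₁ G₂ u₁ u₂ h₁ h₂ hG, distC_eq G₁ G₂ u₁ u₂ h₁ h₂]
    by_cases ha : a = u₂ <;> by_cases hb : b = u₂
    · exact absurd (ha.trans hb.symm) hne
    all_goals (simp [fB, fC, ι, ha, hb, SimpleGraph.dist_self] <;> omega)

include h₁ h₂ hG in
lemma eIff₂ (a₀ b₀ : V₂) {e : Sym2 (V₁ ⊕ V₂)} (he : e ∈ (bridgeGraph G₁ G₂ u₁ u₂).edgeSet) :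
    (eDist (bridgeGraph G₁ G₂ u₁ u₂) e (Sum.inr a₀)
        < eDist (bridgeGraph G₁ G₂ u₁ u₂) e (Sum.inr b₀))
      ↔ (eDist (contractBridge G₁ G₂ u₁ u₂) (φ u₁ u₂ e) (ι u₁ u₂ a₀)
        < eDist (contractBridge G₁ G₂ u₁ u₂) (φ u₁ u₂ e) (ι u₁ u₂ b₀)) := by
  rcases B_edge_cases G₁ G₂ u₁ u₂ he with rfl | ⟨p, q, hpq, rfl⟩ | ⟨a, b, hab, rfl⟩
  · rw [phi_bedge]
    simp only [bedge, eDist_mk, distB_eq G₁ G₂ u₁ u₂ h₁ h₂ hG, distC_eq G₁ G₂ u₁ u₂ h₁ h₂]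
    by_cases ha : a₀ = u₂ <;> by_cases hb : b₀ = u₂ <;>
      simp [fB, fC, ι, ha, hb, SimpleGraph.dist_self] <;> omega
  · rw [phi_inl]
    simp only [eDist_mk, distB_eq G₁ G₂ u₁ u₂ h₁ h₂ hG, distC_eq G₁ G₂ u₁ u₂ h₁ h₂]
    by_cases ha : a₀ = u₂ <;> by_cases hb : b₀ = u₂ <;>
      simp [fB, fC, ι, ha, hb, SimpleGraph.dist_self] <;> omega
  · rw [phi_inr]
    have hne : a ≠ b := hab.ne
    simp only [eDist_mk, distB_eq G₁ G₂ u₁ u₂ h₁ h₂ hG, distC_eq G₁ G₂ u₁ u₂ h₁ h₂]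
    by_cases ha : a = u₂ <;> by_cases hb : b = u₂
    · exact absurd (ha.trans hb.symm) hne
    all_goals (by_cases ha0 : a₀ = u₂ <;> by_cases hb0 : b₀ = u₂ <;>
      simp [fB, fC, ι, ha, hb, ha0, hb0, SimpleGraph.dist_self] <;> omega)

include h₁ h₂ hG in
lemma szN₁ (x y : V₁) : szN (bridgeGraph G₁ G₂ u₁ u₂) (Sum.inl x) (Sum.inl y)
    = szN (contractBridge G₁ G₂ u₁ u₂) (Sum.inl x) (Sum.inl y) := by
  unfold szN
  congr 1
  ext w
  simp only [Set.mem_setOf_eq]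
  exact nIff₁ G₁ G₂ u₁ u₂ h₁ h₂ hG x y w

include h₁ h₂ hG in
lemma szN₂ (a b : V₂) : szN (bridgeGraph G₁ G₂ u₁ u₂) (Sum.inr a) (Sum.inr b)
    = szN (contractBridge G₁ G₂ u₁ u₂) (ι u₁ u₂ a) (ι u₁ u₂ b) := by
  unfold szN
  congr 1
  ext w
  simp only [Set.mem_setOf_eq]
  exact nIff₂ G₁ G₂ u₁ u₂ h₁ h₂ hG a b w

lemma szM_transfer (v w v' w' : V₁ ⊕ V₂)
    (hiff : ∀ e ∈ (bridgeGraph G₁ G₂ u₁ u₂).edgeSet,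
      (eDist (bridgeGraph G₁ G₂ u₁ u₂) e v < eDist (bridgeGraph G₁ G₂ u₁ u₂) e w ↔
        eDist (contractBridge G₁ G₂ u₁ u₂) (φ u₁ u₂ e) v'
          < eDist (contractBridge G₁ G₂ u₁ u₂) (φ u₁ u₂ e) w')) :
    szM (bridgeGraph G₁ G₂ u₁ u₂) v w = szM (contractBridge G₁ G₂ u₁ u₂) v' w' := by
  unfold szM
  have himg : {e | e ∈ (contractBridge G₁ G₂ u₁ u₂).edgeSet ∧
        eDist (contractBridge G₁ G₂ u₁ u₂) e v' < eDist (contractBridge G₁ G₂ u₁ u₂) e w'}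
      = φ u₁ u₂ '' {e | e ∈ (bridgeGraph G₁ G₂ u₁ u₂).edgeSet ∧
        eDist (bridgeGraph G₁ G₂ u₁ u₂) e v < eDist (bridgeGraph G₁ G₂ u₁ u₂) e w} := by
    ext e'
    simp only [Set.mem_image, Set.mem_setOf_eq]
    constructor
    · rintro ⟨hmem, hlt⟩
      obtain ⟨e, he, rfl⟩ := phi_surjOn G₁ G₂ u₁ u₂ hmem
      exact ⟨e, ⟨he, (hiff e he).mpr hlt⟩, rfl⟩
    · rintro ⟨e, ⟨he, hlt⟩, rfl⟩
      exact ⟨phi_mem G₁ G₂ u₁ u₂ he, (hiff e he).mp hlt⟩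
  rw [himg, Set.ncard_image_of_injOn ((phi_injOn G₁ G₂ u₁ u₂).mono (fun e he => he.1))]

include h₁ h₂ hG in
lemma szM₁ (x y : V₁) : szM (bridgeGraph G₁ G₂ u₁ u₂) (Sum.inl x) (Sum.inl y)
    = szM (contractBridge G₁ G₂ u₁ u₂) (Sum.inl x) (Sum.inl y) := by
  exact szM_transfer G₁ G₂ u₁ u₂ (Sum.inl x) (Sum.inl y) (Sum.inl x) (Sum.inl y)
    (fun e he => eIff₁ G₁ G₂ u₁ u₂ h₁ h₂ hG x y he)

include h₁ h₂ hG in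
lemma szM₂ (a b : V₂) : szM (bridgeGraph G₁ G₂ u₁ u₂) (Sum.inr a) (Sum.inr b)
    = szM (contractBridge G₁ G₂ u₁ u₂) (ι u₁ u₂ a) (ι u₁ u₂ b) := by
  exact szM_transfer G₁ G₂ u₁ u₂ (Sum.inr a) (Sum.inr b) (ι u₁ u₂ a) (ι u₁ u₂ b)
    (fun e he => eIff₂ G₁ G₂ u₁ u₂ h₁ h₂ hG a b he)

end SzCut
namespace SzCut

variable {V₁ V₂ : Type*} (G₁ : SimpleGraph V₁) (G₂ : SimpleGraph V₂) (u₁ : V₁) (u₂ : V₂)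
variable (h₁ : G₁.Connected) (h₂ : G₂.Connected) (hG : (bridgeGraph G₁ G₂ u₁ u₂).Connected)

include h₁ h₂ in
lemma szM_C_pen_zero : szM (contractBridge G₁ G₂ u₁ u₂) (Sum.inr u₂) (Sum.inl u₁) = 0 := by
  unfold szM
  convert Set.ncard_empty (Sym2 (V₁ ⊕ V₂)) using 2
  ext e
  simp only [Set.mem_setOf_eq, Set.mem_empty_iff_false, iff_false, not_and]
  intro he
  rcases C_edge_cases G₁ G₂ u₁ u₂ he with rfl | ⟨x, y, hxy, rfl⟩ | ⟨b, hb, rfl⟩ |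
      ⟨a, b, ha, hb, hab, rfl⟩
  · simp only [bedge, eDist_mk, distC_eq G₁ G₂ u₁ u₂ h₁ h₂]
    simp [fC, SimpleGraph.dist_self]
  · simp only [eDist_mk, distC_eq G₁ G₂ u₁ u₂ h₁ h₂]
    simp [fC, SimpleGraph.dist_self]
    try omega
  · have hb' : b ≠ u₂ := fun hh => G₂.irrefl (hh ▸ hb)
    simp only [eDist_mk, distC_eq G₁ G₂ u₁ u₂ h₁ h₂]
    simp [fC, hb', SimpleGraph.dist_self]
    try omega
  · simp only [eDist_mk, distC_eq G₁ G₂ u₁ u₂ h₁ h₂]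
    simp [fC, ha, hb, SimpleGraph.dist_self]
    try omega

include h₁ h₂ in
lemma szN_C_pen_one : szN (contractBridge G₁ G₂ u₁ u₂) (Sum.inr u₂) (Sum.inl u₁) = 1 := by
  unfold szN
  convert Set.ncard_singleton (Sum.inr u₂ : V₁ ⊕ V₂) using 2
  ext w
  simp only [Set.mem_setOf_eq, Set.mem_singleton_iff]
  rw [distC_eq G₁ G₂ u₁ u₂ h₁ h₂, distC_eq G₁ G₂ u₁ u₂ h₁ h₂]
  obtain (z | c) := w
  · simp [fC, SimpleGraph.dist_self]
  · by_cases hc : c = u₂ <;> simp [fC, hc, SimpleGraph.dist_self] <;> omega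

variable [Fintype V₁] [Fintype V₂]

lemma exists_nbr₁ (hd₁ : 2 ≤ (bridgeGraph G₁ G₂ u₁ u₂).degree (Sum.inl u₁)) :
    ∃ x, G₁.Adj u₁ x := by
  by_contra hcon
  push_neg at hcon
  have hsub : (bridgeGraph G₁ G₂ u₁ u₂).neighborFinset (Sum.inl u₁) ⊆ {Sum.inr u₂} := by
    intro v hv
    rw [SimpleGraph.mem_neighborFinset] at hv
    obtain (x | a) := v
    · exact absurd hv (hcon x)
    · rw [Finset.mem_singleton, hv.2]
  have hle := Finset.card_le_card hsub
  rw [SimpleGraph.card_neighborFinset_eq_degree, Finset.card_singleton] at hle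
  omega

lemma exists_nbr₂ (hd₂ : 2 ≤ (bridgeGraph G₁ G₂ u₁ u₂).degree (Sum.inr u₂)) :
    ∃ b, G₂.Adj u₂ b := by
  by_contra hcon
  push_neg at hcon
  have hsub : (bridgeGraph G₁ G₂ u₁ u₂).neighborFinset (Sum.inr u₂) ⊆ {Sum.inl u₁} := by
    intro v hv
    rw [SimpleGraph.mem_neighborFinset] at hv
    obtain (x | a) := v
    · rw [Finset.mem_singleton, hv.2]
    · exact absurd hv (hcon a)
  have hle := Finset.card_le_card hsub
  rw [SimpleGraph.card_neighborFinset_eq_degree, Finset.card_singleton] at hle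
  omega


include h₁ h₂ hG in
lemma m1_pos {x₀ : V₁} (hx : G₁.Adj u₁ x₀) :
    1 ≤ szM (bridgeGraph G₁ G₂ u₁ u₂) (Sum.inl u₁) (Sum.inr u₂) := by
  rw [Nat.one_le_iff_ne_zero, ← Nat.pos_iff_ne_zero, szM,
    Set.ncard_pos (Set.toFinite _)]
  refine ⟨s(Sum.inl u₁, Sum.inl x₀), hx, ?_⟩
  simp only [eDist_mk, distB_eq G₁ G₂ u₁ u₂ h₁ h₂ hG]
  simp [fB, SimpleGraph.dist_self]

include h₁ h₂ hG in
lemma m2_pos {y₀ : V₂} (hy : G₂.Adj u₂ y₀) :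
    1 ≤ szM (bridgeGraph G₁ G₂ u₁ u₂) (Sum.inr u₂) (Sum.inl u₁) := by
  rw [Nat.one_le_iff_ne_zero, ← Nat.pos_iff_ne_zero, szM,
    Set.ncard_pos (Set.toFinite _)]
  refine ⟨s(Sum.inr u₂, Sum.inr y₀), hy, ?_⟩
  simp only [eDist_mk, distB_eq G₁ G₂ u₁ u₂ h₁ h₂ hG]
  simp [fB, SimpleGraph.dist_self]

include h₁ h₂ hG in
lemma n1_ge2 {x₀ : V₁} (hx : G₁.Adj u₁ x₀) :
    2 ≤ szN (bridgeGraph G₁ G₂ u₁ u₂) (Sum.inl u₁) (Sum.inr u₂) := by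
  rw [Nat.succ_le_iff, szN, Set.one_lt_ncard (Set.toFinite _)]
  refine ⟨Sum.inl u₁, ?_, Sum.inl x₀, ?_, by simp [hx.ne]⟩ <;>
  · simp only [Set.mem_setOf_eq, distB_eq G₁ G₂ u₁ u₂ h₁ h₂ hG]
    simp [fB, SimpleGraph.dist_self]

include h₁ h₂ hG in
lemma n2_ge2 {y₀ : V₂} (hy : G₂.Adj u₂ y₀) :
    2 ≤ szN (bridgeGraph G₁ G₂ u₁ u₂) (Sum.inr u₂) (Sum.inl u₁) := by
  rw [Nat.succ_le_iff, szN, Set.one_lt_ncard (Set.toFinite _)]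
  refine ⟨Sum.inr u₂, ?_, Sum.inr y₀, ?_, by simp [hy.ne]⟩ <;>
  · simp only [Set.mem_setOf_eq, distB_eq G₁ G₂ u₁ u₂ h₁ h₂ hG]
    simp [fB, SimpleGraph.dist_self]

include h₁ h₂ hG in
lemma szM_C_split :
    szM (contractBridge G₁ G₂ u₁ u₂) (Sum.inl u₁) (Sum.inr u₂)
      = szM (bridgeGraph G₁ G₂ u₁ u₂) (Sum.inl u₁) (Sum.inr u₂)
        + szM (bridgeGraph G₁ G₂ u₁ u₂) (Sum.inr u₂) (Sum.inl u₁) := by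
  have hinl : ∀ x y : V₁, G₁.Adj x y →
      (eDist (bridgeGraph G₁ G₂ u₁ u₂) s(Sum.inl x, Sum.inl y) (Sum.inl u₁)
        < eDist (bridgeGraph G₁ G₂ u₁ u₂) s(Sum.inl x, Sum.inl y) (Sum.inr u₂)) := by
    intro x y _
    simp only [eDist_mk, distB_eq G₁ G₂ u₁ u₂ h₁ h₂ hG]
    simp [fB, SimpleGraph.dist_self]
    try omega
  have hinr : ∀ a b : V₂, G₂.Adj a b →
      (eDist (bridgeGraph G₁ G₂ u₁ u₂) s(Sum.inr a, Sum.inr b) (Sum.inr u₂)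
        < eDist (bridgeGraph G₁ G₂ u₁ u₂) s(Sum.inr a, Sum.inr b) (Sum.inl u₁)) := by
    intro a b _
    simp only [eDist_mk, distB_eq G₁ G₂ u₁ u₂ h₁ h₂ hG]
    simp [fB, SimpleGraph.dist_self]
    try omega
  unfold szM
  have h1 : {e | e ∈ (contractBridge G₁ G₂ u₁ u₂).edgeSet ∧
        eDist (contractBridge G₁ G₂ u₁ u₂) e (Sum.inl u₁)
          < eDist (contractBridge G₁ G₂ u₁ u₂) e (Sum.inr u₂)}
      = φ u₁ u₂ '' ((bridgeGraph G₁ G₂ u₁ u₂).edgeSet \ {bedge u₁ u₂}) := by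
    ext e'
    simp only [Set.mem_setOf_eq, Set.mem_image, Set.mem_diff, Set.mem_singleton_iff]
    constructor
    · rintro ⟨hmem, hlt⟩
      obtain ⟨e, he, rfl⟩ := phi_surjOn G₁ G₂ u₁ u₂ hmem
      refine ⟨e, ⟨he, ?_⟩, rfl⟩
      rintro rfl
      rw [phi_bedge] at hlt
      simp only [bedge, eDist_mk, distC_eq G₁ G₂ u₁ u₂ h₁ h₂] at hlt
      simp [fC, SimpleGraph.dist_self] at hlt
    · rintro ⟨e, ⟨he, hne⟩, rfl⟩
      refine ⟨phi_mem G₁ G₂ u₁ u₂ he, ?_⟩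
      rcases B_edge_cases G₁ G₂ u₁ u₂ he with rfl | ⟨x, y, hxy, rfl⟩ | ⟨a, b, hab, rfl⟩
      · exact absurd rfl hne
      · rw [phi_inl]
        simp only [eDist_mk, distC_eq G₁ G₂ u₁ u₂ h₁ h₂]
        simp [fC, SimpleGraph.dist_self]
        try omega
      · rw [phi_inr]
        have hab' : a ≠ b := hab.ne
        by_cases ha : a = u₂ <;> by_cases hb : b = u₂
        · exact absurd (ha.trans hb.symm) hab'
        all_goals
          simp only [eDist_mk, distC_eq G₁ G₂ u₁ u₂ h₁ h₂]
          simp [fC, ι, ha, hb, SimpleGraph.dist_self]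
          try omega
  have h2 : ((bridgeGraph G₁ G₂ u₁ u₂).edgeSet \ {bedge u₁ u₂})
      = {e | e ∈ (bridgeGraph G₁ G₂ u₁ u₂).edgeSet ∧
          eDist (bridgeGraph G₁ G₂ u₁ u₂) e (Sum.inl u₁)
            < eDist (bridgeGraph G₁ G₂ u₁ u₂) e (Sum.inr u₂)}
        ∪ {e | e ∈ (bridgeGraph G₁ G₂ u₁ u₂).edgeSet ∧
          eDist (bridgeGraph G₁ G₂ u₁ u₂) e (Sum.inr u₂)
            < eDist (bridgeGraph G₁ G₂ u₁ u₂) e (Sum.inl u₁)} := by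
    ext e
    simp only [Set.mem_diff, Set.mem_singleton_iff, Set.mem_union, Set.mem_setOf_eq]
    constructor
    · rintro ⟨he, hne⟩
      rcases B_edge_cases G₁ G₂ u₁ u₂ he with rfl | ⟨x, y, hxy, rfl⟩ | ⟨a, b, hab, rfl⟩
      · exact absurd rfl hne
      · exact Or.inl ⟨he, hinl x y hxy⟩
      · exact Or.inr ⟨he, hinr a b hab⟩
    · rintro (⟨he, hlt⟩ | ⟨he, hlt⟩) <;> refine ⟨he, ?_⟩ <;> rintro rfl <;>
      · simp only [bedge, eDist_mk, distB_eq G₁ G₂ u₁ u₂ h₁ h₂ hG] at hlt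
        simp [fB, SimpleGraph.dist_self] at hlt
  rw [h1, Set.ncard_image_of_injOn ((phi_injOn G₁ G₂ u₁ u₂).mono Set.diff_subset), h2,
    Set.ncard_union_eq ?_ (Set.toFinite _) (Set.toFinite _)]
  rw [Set.disjoint_left]
  rintro e ⟨-, hlt⟩ ⟨-, hlt'⟩
  omega

end SzCut
namespace SzCut

/-- the edge-Szeged weight of an edge -/
def gE {V : Type*} (G : SimpleGraph V) : Sym2 V → ℕ :=
  Sym2.lift ⟨fun u v => szM G u v * szM G v u, fun u v => mul_comm _ _⟩

/-- the edge-vertex-Szeged weight of an edge -/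
def gV {V : Type*} (G : SimpleGraph V) : Sym2 V → ℕ :=
  Sym2.lift ⟨fun u v => szN G u v * szM G v u + szN G v u * szM G u v,
    fun u v => by ring⟩

lemma gE_mk {V : Type*} (G : SimpleGraph V) (u v : V) :
    gE G s(u, v) = szM G u v * szM G v u := Sym2.lift_mk _ _ _

lemma gV_mk {V : Type*} (G : SimpleGraph V) (u v : V) :
    gV G s(u, v) = szN G u v * szM G v u + szN G v u * szM G u v := Sym2.lift_mk _ _ _

lemma szE_eq {V : Type*} [Fintype V] (G : SimpleGraph V) :
    szE G = ∑ e ∈ G.edgeFinset, gE G e := rfl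

lemma szEV_eq {V : Type*} [Fintype V] (G : SimpleGraph V) :
    szEV G = (1/2 : ℚ) * ((∑ e ∈ G.edgeFinset, gV G e : ℕ) : ℚ) := by
  rw [szEV]
  congr 1
  rw [Nat.cast_sum]
  refine Finset.sum_congr rfl fun e _ => ?_
  induction e using Sym2.ind with
  | _ u v => rw [Sym2.lift_mk, gV_mk]

variable {V₁ V₂ : Type*} (G₁ : SimpleGraph V₁) (G₂ : SimpleGraph V₂) (u₁ : V₁) (u₂ : V₂)
variable (h₁ : G₁.Connected) (h₂ : G₂.Connected) (hG : (bridgeGraph G₁ G₂ u₁ u₂).Connected)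
variable [Fintype V₁] [Fintype V₂]

lemma bedge_mem_B : bedge u₁ u₂ ∈ (bridgeGraph G₁ G₂ u₁ u₂).edgeFinset :=
  SimpleGraph.mem_edgeFinset.mpr (adjB_bridge G₁ G₂ u₁ u₂)

lemma bedge_mem_C : bedge u₁ u₂ ∈ (contractBridge G₁ G₂ u₁ u₂).edgeFinset :=
  SimpleGraph.mem_edgeFinset.mpr (adjC_pendant G₁ G₂ u₁ u₂)

lemma sum_rest (F F' : Sym2 (V₁ ⊕ V₂) → ℕ)
    (hval : ∀ e ∈ (bridgeGraph G₁ G₂ u₁ u₂).edgeSet, e ≠ bedge u₁ u₂ →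
      F e = F' (φ u₁ u₂ e)) :
    ∑ e ∈ (bridgeGraph G₁ G₂ u₁ u₂).edgeFinset.erase (bedge u₁ u₂), F e
      = ∑ e ∈ (contractBridge G₁ G₂ u₁ u₂).edgeFinset.erase (bedge u₁ u₂), F' e := by
  refine Finset.sum_bij (fun e _ => φ u₁ u₂ e) ?_ ?_ ?_ ?_
  · intro e he
    obtain ⟨hne, hmem⟩ := Finset.mem_erase.mp he
    rw [SimpleGraph.mem_edgeFinset] at hmem
    exact Finset.mem_erase.mpr ⟨phi_ne_bedge G₁ G₂ u₁ u₂ hmem hne,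
      SimpleGraph.mem_edgeFinset.mpr (phi_mem G₁ G₂ u₁ u₂ hmem)⟩
  · intro e he e' he' heq
    obtain ⟨-, hmem⟩ := Finset.mem_erase.mp he
    obtain ⟨-, hmem'⟩ := Finset.mem_erase.mp he'
    exact phi_injOn G₁ G₂ u₁ u₂ (SimpleGraph.mem_edgeFinset.mp hmem)
      (SimpleGraph.mem_edgeFinset.mp hmem') heq
  · intro e' he'
    obtain ⟨hne', hmem'⟩ := Finset.mem_erase.mp he'
    obtain ⟨e, he, rfl⟩ := phi_surjOn G₁ G₂ u₁ u₂ (SimpleGraph.mem_edgeFinset.mp hmem')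
    have hne : e ≠ bedge u₁ u₂ := by
      rintro rfl
      exact hne' (phi_bedge u₁ u₂)
    exact ⟨e, Finset.mem_erase.mpr ⟨hne, SimpleGraph.mem_edgeFinset.mpr he⟩, rfl⟩
  · intro e he
    obtain ⟨hne, hmem⟩ := Finset.mem_erase.mp he
    exact hval e (SimpleGraph.mem_edgeFinset.mp hmem) hne

include h₁ h₂ hG in
lemma gE_val : ∀ e ∈ (bridgeGraph G₁ G₂ u₁ u₂).edgeSet, e ≠ bedge u₁ u₂ →
    gE (bridgeGraph G₁ G₂ u₁ u₂) e = gE (contractBridge G₁ G₂ u₁ u₂) (φ u₁ u₂ e) := by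
  intro e he hne
  rcases B_edge_cases G₁ G₂ u₁ u₂ he with rfl | ⟨x, y, hxy, rfl⟩ | ⟨a, b, hab, rfl⟩
  · exact absurd rfl hne
  · rw [phi_inl, gE_mk, gE_mk, szM₁ G₁ G₂ u₁ u₂ h₁ h₂ hG x y, szM₁ G₁ G₂ u₁ u₂ h₁ h₂ hG y x]
  · rw [phi_inr, gE_mk, gE_mk, szM₂ G₁ G₂ u₁ u₂ h₁ h₂ hG a b, szM₂ G₁ G₂ u₁ u₂ h₁ h₂ hG b a]

include h₁ h₂ hG in
lemma gV_val : ∀ e ∈ (bridgeGraph G₁ G₂ u₁ u₂).edgeSet, e ≠ bedge u₁ u₂ →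
    gV (bridgeGraph G₁ G₂ u₁ u₂) e = gV (contractBridge G₁ G₂ u₁ u₂) (φ u₁ u₂ e) := by
  intro e he hne
  rcases B_edge_cases G₁ G₂ u₁ u₂ he with rfl | ⟨x, y, hxy, rfl⟩ | ⟨a, b, hab, rfl⟩
  · exact absurd rfl hne
  · rw [phi_inl, gV_mk, gV_mk, szM₁ G₁ G₂ u₁ u₂ h₁ h₂ hG x y, szM₁ G₁ G₂ u₁ u₂ h₁ h₂ hG y x,
      szN₁ G₁ G₂ u₁ u₂ h₁ h₂ hG x y, szN₁ G₁ G₂ u₁ u₂ h₁ h₂ hG y x]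
  · rw [phi_inr, gV_mk, gV_mk, szM₂ G₁ G₂ u₁ u₂ h₁ h₂ hG a b, szM₂ G₁ G₂ u₁ u₂ h₁ h₂ hG b a,
      szN₂ G₁ G₂ u₁ u₂ h₁ h₂ hG a b, szN₂ G₁ G₂ u₁ u₂ h₁ h₂ hG b a]

include h₁ h₂ hG in
lemma szE_lt {x₀ : V₁} {y₀ : V₂} (hx : G₁.Adj u₁ x₀) (hy : G₂.Adj u₂ y₀) :
    szE (contractBridge G₁ G₂ u₁ u₂) < szE (bridgeGraph G₁ G₂ u₁ u₂) := by
  rw [szE_eq, szE_eq,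
    ← Finset.add_sum_erase _ _ (bedge_mem_B G₁ G₂ u₁ u₂),
    ← Finset.add_sum_erase _ _ (bedge_mem_C G₁ G₂ u₁ u₂),
    ← sum_rest G₁ G₂ u₁ u₂ _ _ (gE_val G₁ G₂ u₁ u₂ h₁ h₂ hG)]
  have hC0 : gE (contractBridge G₁ G₂ u₁ u₂) (bedge u₁ u₂) = 0 := by
    rw [bedge, gE_mk, szM_C_pen_zero G₁ G₂ u₁ u₂ h₁ h₂, mul_zero]
  have hBpos : 0 < gE (bridgeGraph G₁ G₂ u₁ u₂) (bedge u₁ u₂) := by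
    rw [bedge, gE_mk]
    exact Nat.mul_pos (m1_pos G₁ G₂ u₁ u₂ h₁ h₂ hG hx) (m2_pos G₁ G₂ u₁ u₂ h₁ h₂ hG hy)
  omega

include h₁ h₂ hG in
lemma szEV_lt {x₀ : V₁} {y₀ : V₂} (hx : G₁.Adj u₁ x₀) (hy : G₂.Adj u₂ y₀) :
    szEV (contractBridge G₁ G₂ u₁ u₂) < szEV (bridgeGraph G₁ G₂ u₁ u₂) := by
  rw [szEV_eq, szEV_eq]
  have key : (∑ e ∈ (contractBridge G₁ G₂ u₁ u₂).edgeFinset, gV (contractBridge G₁ G₂ u₁ u₂) e)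
      < ∑ e ∈ (bridgeGraph G₁ G₂ u₁ u₂).edgeFinset, gV (bridgeGraph G₁ G₂ u₁ u₂) e := by
    rw [← Finset.add_sum_erase _ _ (bedge_mem_B G₁ G₂ u₁ u₂),
      ← Finset.add_sum_erase _ _ (bedge_mem_C G₁ G₂ u₁ u₂),
      ← sum_rest G₁ G₂ u₁ u₂ _ _ (gV_val G₁ G₂ u₁ u₂ h₁ h₂ hG)]
    have hC : gV (contractBridge G₁ G₂ u₁ u₂) (bedge u₁ u₂)
        = szM (bridgeGraph G₁ G₂ u₁ u₂) (Sum.inl u₁) (Sum.inr u₂)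
          + szM (bridgeGraph G₁ G₂ u₁ u₂) (Sum.inr u₂) (Sum.inl u₁) := by
      rw [bedge, gV_mk, szM_C_pen_zero G₁ G₂ u₁ u₂ h₁ h₂,
        szN_C_pen_one G₁ G₂ u₁ u₂ h₁ h₂, szM_C_split G₁ G₂ u₁ u₂ h₁ h₂ hG]
      ring
    have hB : gV (bridgeGraph G₁ G₂ u₁ u₂) (bedge u₁ u₂)
        = szN (bridgeGraph G₁ G₂ u₁ u₂) (Sum.inl u₁) (Sum.inr u₂)
            * szM (bridgeGraph G₁ G₂ u₁ u₂) (Sum.inr u₂) (Sum.inl u₁)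
          + szN (bridgeGraph G₁ G₂ u₁ u₂) (Sum.inr u₂) (Sum.inl u₁)
            * szM (bridgeGraph G₁ G₂ u₁ u₂) (Sum.inl u₁) (Sum.inr u₂) := by
      rw [bedge, gV_mk]
    rw [hC, hB]
    have c1 : 2 * szM (bridgeGraph G₁ G₂ u₁ u₂) (Sum.inr u₂) (Sum.inl u₁)
        ≤ szN (bridgeGraph G₁ G₂ u₁ u₂) (Sum.inl u₁) (Sum.inr u₂)
          * szM (bridgeGraph G₁ G₂ u₁ u₂) (Sum.inr u₂) (Sum.inl u₁) :=
      Nat.mul_le_mul_right _ (n1_ge2 G₁ G₂ u₁ u₂ h₁ h₂ hG hx)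
    have c2 : 2 * szM (bridgeGraph G₁ G₂ u₁ u₂) (Sum.inl u₁) (Sum.inr u₂)
        ≤ szN (bridgeGraph G₁ G₂ u₁ u₂) (Sum.inr u₂) (Sum.inl u₁)
          * szM (bridgeGraph G₁ G₂ u₁ u₂) (Sum.inl u₁) (Sum.inr u₂) :=
      Nat.mul_le_mul_right _ (n2_ge2 G₁ G₂ u₁ u₂ h₁ h₂ hG hy)
    have p1 := m1_pos G₁ G₂ u₁ u₂ h₁ h₂ hG hx
    have p2 := m2_pos G₁ G₂ u₁ u₂ h₁ h₂ hG hy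
    omega
  have : ((∑ e ∈ (contractBridge G₁ G₂ u₁ u₂).edgeFinset,
      gV (contractBridge G₁ G₂ u₁ u₂) e : ℕ) : ℚ)
      < ((∑ e ∈ (bridgeGraph G₁ G₂ u₁ u₂).edgeFinset,
      gV (bridgeGraph G₁ G₂ u₁ u₂) e : ℕ) : ℚ) := by exact_mod_cast key
  have hhalf : (0 : ℚ) < 1/2 := by norm_num
  exact mul_lt_mul_of_pos_left this hhalf

end SzCut
/-- Let `G` be a connected graph with a cut edge `u₁u₂` both of whose endpoints
have degree at least `2` in `G`, and let `G₁`, `G₂` be the components of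
`G - u₁u₂` containing `u₁`, `u₂` respectively.  Let `G'` be obtained from `G` by
contracting the edge `u₁u₂` and attaching a pendant edge at the contracted
vertex.  Then `Sz_e(G') < Sz_e(G)` and `Sz_ev(G') < Sz_ev(G)`. -/
theorem szeged_contract_cut_edge {V₁ V₂ : Type*} [Fintype V₁] [Fintype V₂]
    (G₁ : SimpleGraph V₁) (G₂ : SimpleGraph V₂) (u₁ : V₁) (u₂ : V₂)
    (h₁ : G₁.Connected) (h₂ : G₂.Connected)
    (hG : (bridgeGraph G₁ G₂ u₁ u₂).Connected)
    (hd₁ : 2 ≤ (bridgeGraph G₁ G₂ u₁ u₂).degree (Sum.inl u₁))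
    (hd₂ : 2 ≤ (bridgeGraph G₁ G₂ u₁ u₂).degree (Sum.inr u₂)) :
    szE (contractBridge G₁ G₂ u₁ u₂) < szE (bridgeGraph G₁ G₂ u₁ u₂) ∧
      szEV (contractBridge G₁ G₂ u₁ u₂) < szEV (bridgeGraph G₁ G₂ u₁ u₂) := by
  obtain ⟨x₀, hx⟩ := SzCut.exists_nbr₁ G₁ G₂ u₁ u₂ hd₁
  obtain ⟨y₀, hy⟩ := SzCut.exists_nbr₂ G₁ G₂ u₁ u₂ hd₂
  exact ⟨SzCut.szE_lt G₁ G₂ u₁ u₂ h₁ h₂ hG hx hy,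
    SzCut.szEV_lt G₁ G₂ u₁ u₂ h₁ h₂ hG hx hy⟩
end
end

section
/- For integers n and k with n ≥ 2k + 1 and k ≥ 0, the edge Szeged index of C_0(n,k) equals 2kn + 2k² − 5k. -/
open SimpleGraph Finset
open scoped Classical

noncomputable section

variable {V : Type*}

/-- the cactus `C₀(n,k)`: `k` triangles and `n - 2k - 1` pendant edges sharing
the common vertex `0`; for `1 ≤ j ≤ k` the vertices `2j-1, 2j` together with `0`
form a triangle, and the vertices `2k+1, …, n-1` are pendant vertices at `0`. -/
def C0 (n k : ℕ) : SimpleGraph (Fin n) where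
  Adj a b := a ≠ b ∧ (a.val = 0 ∨ b.val = 0 ∨
    (a.val ≤ 2*k ∧ b.val ≤ 2*k ∧ (a.val + 1)/2 = (b.val + 1)/2))
  symm := by
    constructor
    rintro a b ⟨h1, h2⟩
    refine ⟨h1.symm, ?_⟩
    rcases h2 with h | h | ⟨h3, h4, h5⟩
    · exact Or.inr (Or.inl h)
    · exact Or.inl h
    · exact Or.inr (Or.inr ⟨h4, h3, h5.symm⟩)
  loopless := by constructor; rintro a ⟨h1, -⟩; exact h1 rfl

/-- a cactus: a connected graph in which any two cycles (cycles with distinct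
edge sets) have at most one common vertex -/
def IsCactus (G : SimpleGraph V) : Prop :=
  G.Connected ∧ ∀ ⦃a b : V⦄ (c₁ : G.Walk a a) (c₂ : G.Walk b b),
    c₁.IsCycle → c₂.IsCycle →
    (¬ ∀ e : Sym2 V, e ∈ c₁.edges ↔ e ∈ c₂.edges) →
    ∀ x y : V, x ∈ c₁.support → x ∈ c₂.support → y ∈ c₁.support → y ∈ c₂.support →
      x = y

variable {n k : ℕ}

lemma c0_adj {a b : Fin n} : (C0 n k).Adj a b ↔ a ≠ b ∧ (a.val = 0 ∨ b.val = 0 ∨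
    (a.val ≤ 2*k ∧ b.val ≤ 2*k ∧ (a.val + 1)/2 = (b.val + 1)/2)) := Iff.rfl

lemma c0_adj_z {z : Fin n} (hz : z.val = 0) {w : Fin n} (hw : w ≠ z) :
    (C0 n k).Adj z w := ⟨hw.symm, Or.inl hz⟩

lemma c0_dist {z : Fin n} (hz : z.val = 0) (x y : Fin n) :
    (C0 n k).dist x y = if x = y then 0 else if (C0 n k).Adj x y then 1 else 2 := by
  split_ifs with h1 h2
  · simp [h1]
  · exact SimpleGraph.dist_eq_one_iff_adj.mpr h2
  · have hxz : x ≠ z := by rintro rfl; exact h2 (c0_adj_z hz (Ne.symm h1))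
    have hyz : y ≠ z := by
      rintro rfl; exact h2 ((c0_adj_z hz hxz).symm)
    have hadjx : (C0 n k).Adj x z := (c0_adj_z hz hxz).symm
    have hadjy : (C0 n k).Adj z y := c0_adj_z hz hyz
    have hw : (C0 n k).dist x y ≤ 2 := by
      have := SimpleGraph.dist_le (Walk.cons hadjx (Walk.cons hadjy Walk.nil))
      simpa using this
    have hr : (C0 n k).Reachable x y := ⟨Walk.cons hadjx (Walk.cons hadjy Walk.nil)⟩
    have h0 : 0 < (C0 n k).dist x y := hr.pos_dist_of_ne h1
    have h1' : (C0 n k).dist x y ≠ 1 := fun hc =>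
      h2 (SimpleGraph.dist_eq_one_iff_adj.mp hc)
    omega

def IsBase (n k : ℕ) (a b : Fin n) : Prop :=
  1 ≤ a.val ∧ a.val % 2 = 1 ∧ b.val = a.val + 1 ∧ b.val ≤ 2*k

lemma isBase_adj {a b : Fin n} (hab : IsBase n k a b) : (C0 n k).Adj a b := by
  obtain ⟨h1, h2, h3, h4⟩ := hab
  refine ⟨fun hc => by simp [hc] at h3, Or.inr (Or.inr ⟨by omega, h4, by omega⟩)⟩

lemma eDist_mk (G : SimpleGraph (Fin n)) (x y w : Fin n) :
    eDist G (s(x, y)) w = min (G.dist x w) (G.dist y w) := rfl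

lemma eDist_spoke {z : Fin n} (hz : z.val = 0) {x : Fin n} (hx : x ≠ z) (w : Fin n) :
    eDist (C0 n k) (s(z, x)) w = if w = z ∨ w = x then 0 else 1 := by
  rw [eDist_mk]
  by_cases h1 : w = z
  · simp [h1, c0_dist hz]
  by_cases h2 : w = x
  · subst h2; simp [c0_dist hz]
  · have hd1 : (C0 n k).dist z w = 1 := by
      rw [c0_dist hz]; simp [Ne.symm h1, c0_adj_z hz h1]
    have hd2 : 1 ≤ (C0 n k).dist x w := by
      rw [c0_dist hz]; split_ifs with a b
      · exact absurd a.symm h2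
      · omega
      · omega
    simp [h1, h2, hd1, Nat.min_eq_left hd2]

lemma isBase_not_adj {a b : Fin n} (hab : IsBase n k a b) {w : Fin n}
    (hw0 : w.val ≠ 0) (hwa : w ≠ a) (hwb : w ≠ b) :
    ¬ (C0 n k).Adj a w ∧ ¬ (C0 n k).Adj b w := by
  obtain ⟨h1, h2, h3, h4⟩ := hab
  have hva : w.val ≠ a.val := fun hc => hwa (Fin.ext hc)
  have hvb : w.val ≠ b.val := fun hc => hwb (Fin.ext hc)
  constructor
  · rintro ⟨-, hc | hc | ⟨-, -, hc⟩⟩ <;> omega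
  · rintro ⟨-, hc | hc | ⟨-, -, hc⟩⟩ <;> omega

lemma eDist_base {z : Fin n} (hz : z.val = 0) {a b : Fin n} (hab : IsBase n k a b)
    (w : Fin n) :
    eDist (C0 n k) (s(a, b)) w = if w = a ∨ w = b then 0 else if w = z then 1 else 2 := by
  rw [eDist_mk]
  have hane : a ≠ b := (isBase_adj hab).ne
  have haz : a ≠ z := fun hc => by
    have := hab.1; rw [hc, hz] at this; omega
  have hbz : b ≠ z := fun hc => by
    have := hab.2.2.1; rw [hc, hz] at this; omega
  by_cases h1 : w = a
  · simp [h1, c0_dist hz]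
  by_cases h2 : w = b
  · simp [h2, c0_dist hz]
  by_cases h3 : w = z
  · subst h3
    have hda : (C0 n k).dist a w = 1 := by
      rw [c0_dist hz]; simp [haz, ((c0_adj_z hz haz).symm : (C0 n k).Adj a w)]
    have hdb : (C0 n k).dist b w = 1 := by
      rw [c0_dist hz]; simp [hbz, ((c0_adj_z hz hbz).symm : (C0 n k).Adj b w)]
    simp [hda, hdb, Ne.symm haz, Ne.symm hbz]
  · have hw0 : w.val ≠ 0 := fun hc => h3 (Fin.ext (by rw [hc, hz]))
    obtain ⟨hna, hnb⟩ := isBase_not_adj hab hw0 h1 h2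
    have hda : (C0 n k).dist a w = 2 := by
      rw [c0_dist hz]; simp [hna]; rintro rfl; exact h1 rfl
    have hdb : (C0 n k).dist b w = 2 := by
      rw [c0_dist hz]; simp [hnb]; rintro rfl; exact h2 rfl
    simp [hda, hdb, h1, h2, h3]

lemma mem_edgeSet_c0 {z : Fin n} (hz : z.val = 0) (e : Sym2 (Fin n)) :
    e ∈ (C0 n k).edgeSet ↔ (∃ x : Fin n, x ≠ z ∧ e = s(z, x)) ∨
      (∃ a b : Fin n, IsBase n k a b ∧ e = s(a, b)) := by
  induction e using Sym2.ind with
  | _ u v =>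
    rw [SimpleGraph.mem_edgeSet]
    constructor
    · rintro ⟨hne, hc | hc | ⟨h1, h2, h3⟩⟩
      · refine Or.inl ⟨v, ?_, ?_⟩
        · rintro rfl; exact hne (Fin.ext (by omega))
        · have : u = z := Fin.ext (by omega)
          rw [this]
      · refine Or.inl ⟨u, ?_, ?_⟩
        · rintro rfl; exact hne (Fin.ext (by omega))
        · have : v = z := Fin.ext (by omega)
          rw [this, Sym2.eq_swap]
      · have hne' : u.val ≠ v.val := fun hc => hne (Fin.ext hc)
        by_cases h0u : u.val = 0
        · refine Or.inl ⟨v, ?_, ?_⟩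
          · rintro rfl; exact hne (Fin.ext (by omega))
          · have : u = z := Fin.ext (by omega)
            rw [this]
        by_cases h0v : v.val = 0
        · refine Or.inl ⟨u, ?_, ?_⟩
          · rintro rfl; exact hne (Fin.ext (by omega))
          · have : v = z := Fin.ext (by omega)
            rw [this, Sym2.eq_swap]
        rcases Nat.lt_or_ge u.val v.val with hlt | hge
        · exact Or.inr ⟨u, v, ⟨by omega, by omega, by omega, by omega⟩, rfl⟩
        · exact Or.inr ⟨v, u, ⟨by omega, by omega, by omega, by omega⟩, Sym2.eq_swap⟩
    · rintro (⟨x, hx, he⟩ | ⟨a, b, hab, he⟩)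
      · rw [Sym2.eq_iff] at he
        rcases he with ⟨rfl, rfl⟩ | ⟨rfl, rfl⟩
        · exact c0_adj_z hz hx
        · exact (c0_adj_z hz hx).symm
      · rw [Sym2.eq_iff] at he
        rcases he with ⟨rfl, rfl⟩ | ⟨rfl, rfl⟩
        · exact isBase_adj hab
        · exact (isBase_adj hab).symm

lemma isBase_z_ne {z : Fin n} (hz : z.val = 0) {a b : Fin n} (hab : IsBase n k a b) :
    a ≠ z ∧ b ≠ z := by
  constructor
  · intro hc; have := hab.1; rw [hc, hz] at this; omega
  · intro hc; have := hab.2.2.1; rw [hc, hz] at this; omega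

/-- pendant vertex: szM p z = 0 -/
lemma szM_pendant {z : Fin n} (hz : z.val = 0) {p : Fin n} (hp : 2*k < p.val) :
    szM (C0 n k) p z = 0 := by
  have hpz : p ≠ z := fun hc => by rw [hc, hz] at hp; omega
  have : {e : Sym2 (Fin n) | e ∈ (C0 n k).edgeSet ∧
      eDist (C0 n k) e p < eDist (C0 n k) e z} = ∅ := by
    rw [Set.eq_empty_iff_forall_notMem]
    rintro e ⟨he, hlt⟩
    rw [mem_edgeSet_c0 hz] at he
    rcases he with ⟨x, hx, rfl⟩ | ⟨a, b, hab, rfl⟩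
    · rw [eDist_spoke hz hx z, eDist_spoke hz hx p] at hlt
      simp at hlt
    · have hpa : p ≠ a := fun hc => by
        have := hab.2.2; rw [hc] at hp; omega
      have hpb : p ≠ b := fun hc => by
        have := hab.2.2.2; rw [hc] at hp; omega
      rw [eDist_base hz hab z, eDist_base hz hab p] at hlt
      obtain ⟨haz, hbz⟩ := isBase_z_ne hz hab
      simp [Ne.symm haz, Ne.symm hbz, hpa, hpb, hpz] at hlt
  rw [szM, this, Set.ncard_empty]


lemma base_eq_of_mem {a b a' b' w : Fin n} (hab : IsBase n k a b)
    (hab' : IsBase n k a' b') (hw : w = a ∨ w = b) (hw' : w = a' ∨ w = b') :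
    a' = a ∧ b' = b := by
  obtain ⟨p1, p2, p3, p4⟩ := hab
  obtain ⟨q1, q2, q3, q4⟩ := hab'
  simp only [Fin.ext_iff] at *
  omega

/-- triangle vertex: szM w z = 1 -/
lemma szM_tri {z : Fin n} (hz : z.val = 0) {a b : Fin n} (hab : IsBase n k a b)
    {w : Fin n} (hw : w = a ∨ w = b) : szM (C0 n k) w z = 1 := by
  obtain ⟨haz, hbz⟩ := isBase_z_ne hz hab
  have hwz : w ≠ z := by rcases hw with rfl | rfl <;> assumption
  have : {e : Sym2 (Fin n) | e ∈ (C0 n k).edgeSet ∧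
      eDist (C0 n k) e w < eDist (C0 n k) e z} = {s(a, b)} := by
    ext e
    simp only [Set.mem_setOf_eq, Set.mem_singleton_iff]
    constructor
    · rintro ⟨he, hlt⟩
      rw [mem_edgeSet_c0 hz] at he
      rcases he with ⟨x, hx, rfl⟩ | ⟨a', b', hab', rfl⟩
      · rw [eDist_spoke hz hx z, eDist_spoke hz hx w] at hlt
        simp at hlt
      · rw [eDist_base hz hab' z, eDist_base hz hab' w] at hlt
        obtain ⟨haz', hbz'⟩ := isBase_z_ne hz hab'
        by_cases hm : w = a' ∨ w = b'
        · obtain ⟨h1, h2⟩ := base_eq_of_mem hab hab' hw hm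
          rw [h1, h2]
        · exfalso
          simp [hm, Ne.symm haz', Ne.symm hbz', hwz] at hlt
    · rintro rfl
      refine ⟨(mem_edgeSet_c0 hz _).mpr (Or.inr ⟨a, b, hab, rfl⟩), ?_⟩
      rw [eDist_base hz hab z, eDist_base hz hab w]
      simp [hw, Ne.symm haz, Ne.symm hbz]
  rw [szM, this, Set.ncard_singleton]

/-- base edge endpoints: szM w w' = 1 -/
lemma szM_base {z : Fin n} (hz : z.val = 0) {a b : Fin n} (hab : IsBase n k a b)
    {w w' : Fin n} (hw : (w = a ∧ w' = b) ∨ (w = b ∧ w' = a)) :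
    szM (C0 n k) w w' = 1 := by
  obtain ⟨haz, hbz⟩ := isBase_z_ne hz hab
  have hne : a ≠ b := (isBase_adj hab).ne
  have hwa : w = a ∨ w = b := by rcases hw with ⟨h, -⟩ | ⟨h, -⟩ <;> [exact Or.inl h; exact Or.inr h]
  have hw'a : w' = a ∨ w' = b := by rcases hw with ⟨-, h⟩ | ⟨-, h⟩ <;> [exact Or.inr h; exact Or.inl h]
  have hwz : w ≠ z := by rcases hwa with rfl | rfl <;> assumption
  have hw'z : w' ≠ z := by rcases hw'a with rfl | rfl <;> assumption
  have hww' : w ≠ w' := by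
    rcases hw with ⟨rfl, rfl⟩ | ⟨rfl, rfl⟩
    · exact hne
    · exact hne.symm
  have : {e : Sym2 (Fin n) | e ∈ (C0 n k).edgeSet ∧
      eDist (C0 n k) e w < eDist (C0 n k) e w'} = {s(z, w)} := by
    ext e
    simp only [Set.mem_setOf_eq, Set.mem_singleton_iff]
    constructor
    · rintro ⟨he, hlt⟩
      rw [mem_edgeSet_c0 hz] at he
      rcases he with ⟨x, hx, rfl⟩ | ⟨a', b', hab', rfl⟩
      · rw [eDist_spoke hz hx w, eDist_spoke hz hx w'] at hlt
        have hxw : x = w := by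
          by_contra hc
          simp [hwz, hc, hw'z] at hlt
          split_ifs at hlt <;> omega
        rw [hxw]
      · exfalso
        rw [eDist_base hz hab' w, eDist_base hz hab' w'] at hlt
        by_cases hm : w = a' ∨ w = b'
        · obtain ⟨h1, h2⟩ := base_eq_of_mem hab hab' hwa hm
          have hB : w' = a' ∨ w' = b' := by rw [h1, h2]; exact hw'a
          simp [hm, hB] at hlt
        · simp [hm, hwz] at hlt
          split_ifs at hlt <;> omega
    · rintro rfl
      refine ⟨(mem_edgeSet_c0 hz _).mpr (Or.inl ⟨w, hwz, rfl⟩), ?_⟩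
      rw [eDist_spoke hz hwz w, eDist_spoke hz hwz w']
      simp [Ne.symm hww', hw'z]
  rw [szM, this, Set.ncard_singleton]

lemma spoke_ne_base {z : Fin n} (hz : z.val = 0) {x a b : Fin n}
    (hab : IsBase n k a b) : s(z, x) ≠ s(a, b) := by
  obtain ⟨haz, hbz⟩ := isBase_z_ne hz hab
  intro hc
  rw [Sym2.eq_iff] at hc
  rcases hc with ⟨rfl, rfl⟩ | ⟨rfl, rfl⟩
  · exact haz rfl
  · exact hbz rfl

/-- center vs triangle vertex: complementary set -/
lemma szM_z_tri {z : Fin n} (hz : z.val = 0) {a b : Fin n} (hab : IsBase n k a b)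
    {w : Fin n} (hw : w = a ∨ w = b) :
    szM (C0 n k) z w = (C0 n k).edgeSet.ncard - 2 := by
  obtain ⟨haz, hbz⟩ := isBase_z_ne hz hab
  have hwz : w ≠ z := by rcases hw with rfl | rfl <;> assumption
  have hset : {e : Sym2 (Fin n) | e ∈ (C0 n k).edgeSet ∧
      eDist (C0 n k) e z < eDist (C0 n k) e w} =
      (C0 n k).edgeSet \ {s(z, w), s(a, b)} := by
    ext e
    simp only [Set.mem_setOf_eq, Set.mem_diff, Set.mem_insert_iff,
      Set.mem_singleton_iff]
    constructor
    · rintro ⟨he, hlt⟩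
      refine ⟨he, ?_⟩
      rw [mem_edgeSet_c0 hz] at he
      rcases he with ⟨x, hx, rfl⟩ | ⟨a', b', hab', rfl⟩
      · rw [eDist_spoke hz hx z, eDist_spoke hz hx w] at hlt
        simp only [if_pos (Or.inl rfl)] at hlt
        have hxw : x ≠ w := by
          rintro rfl
          simp at hlt
        push_neg
        refine ⟨?_, spoke_ne_base hz hab⟩
        intro hc
        rw [Sym2.eq_iff] at hc
        rcases hc with ⟨-, rfl⟩ | ⟨rfl, rfl⟩
        · exact hxw rfl
        · exact hx rfl
      · rw [eDist_base hz hab' z, eDist_base hz hab' w] at hlt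
        obtain ⟨haz', hbz'⟩ := isBase_z_ne hz hab'
        push_neg
        refine ⟨fun hc => spoke_ne_base hz hab' hc.symm, ?_⟩
        intro hc
        rw [Sym2.eq_iff] at hc
        have hm : w = a' ∨ w = b' := by
          rcases hc with ⟨rfl, rfl⟩ | ⟨rfl, rfl⟩
          · exact hw
          · rcases hw with rfl | rfl
            · exact Or.inr rfl
            · exact Or.inl rfl
        simp [Ne.symm haz', Ne.symm hbz', hm] at hlt
    · rintro ⟨he, hne⟩
      push_neg at hne
      obtain ⟨hne1, hne2⟩ := hne
      refine ⟨he, ?_⟩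
      rw [mem_edgeSet_c0 hz] at he
      rcases he with ⟨x, hx, rfl⟩ | ⟨a', b', hab', rfl⟩
      · rw [eDist_spoke hz hx z, eDist_spoke hz hx w]
        have hxw : x ≠ w := by
          rintro rfl
          exact hne1 rfl
        simp [hwz, Ne.symm hxw, hxw]
      · rw [eDist_base hz hab' z, eDist_base hz hab' w]
        obtain ⟨haz', hbz'⟩ := isBase_z_ne hz hab'
        have hm : ¬ (w = a' ∨ w = b') := by
          intro hm
          obtain ⟨h1, h2⟩ := base_eq_of_mem hab hab' hw hm
          exact hne2 (by rw [h1, h2])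
        simp [Ne.symm haz', Ne.symm hbz', hm, hwz]
  have hsub : {s(z, w), s(a, b)} ⊆ (C0 n k).edgeSet := by
    rintro e (rfl | rfl)
    · exact (mem_edgeSet_c0 hz _).mpr (Or.inl ⟨w, hwz, rfl⟩)
    · exact (mem_edgeSet_c0 hz _).mpr (Or.inr ⟨a, b, hab, rfl⟩)
  have hcard2 : ({s(z, w), s(a, b)} : Set (Sym2 (Fin n))).ncard = 2 :=
    Set.ncard_pair (spoke_ne_base hz hab)
  rw [szM, hset, Set.ncard_diff hsub, hcard2]

/-- the base edge associated to index j -/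
def fB (n : ℕ) (z : Fin n) (j : ℕ) : Sym2 (Fin n) :=
  if hj : 2*j < n then s(⟨2*j - 1, by omega⟩, ⟨2*j, hj⟩) else s(z, z)

lemma fB_isBase (h : 2*k + 1 ≤ n) (z : Fin n) {j : ℕ} (hj1 : 1 ≤ j) (hj2 : j ≤ k) :
    ∃ a b : Fin n, IsBase n k a b ∧ a.val = 2*j - 1 ∧ b.val = 2*j ∧
      fB n z j = s(a, b) := by
  have hj : 2*j < n := by omega
  refine ⟨⟨2*j - 1, by omega⟩, ⟨2*j, hj⟩, ⟨by simp; omega, by simp; omega,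
    by simp; omega, by simp; omega⟩, rfl, rfl, by rw [fB, dif_pos hj]⟩

lemma edgeFinset_c0 (h : 2*k + 1 ≤ n) {z : Fin n} (hz : z.val = 0) :
    (C0 n k).edgeFinset =
      ((univ.erase z).image (fun x => s(z, x))) ∪ ((Finset.Icc 1 k).image (fB n z)) := by
  ext e
  rw [mem_edgeFinset, mem_edgeSet_c0 hz, Finset.mem_union, Finset.mem_image,
    Finset.mem_image]
  constructor
  · rintro (⟨x, hx, rfl⟩ | ⟨a, b, hab, rfl⟩)
    · exact Or.inl ⟨x, Finset.mem_erase.mpr ⟨hx, Finset.mem_univ x⟩, rfl⟩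
    · refine Or.inr ⟨(a.val + 1)/2, ?_, ?_⟩
      · obtain ⟨p1, p2, p3, p4⟩ := hab
        rw [Finset.mem_Icc]
        omega
      · obtain ⟨p1, p2, p3, p4⟩ := hab
        set j := (a.val + 1)/2 with hjdef
        have hj1 : 1 ≤ j := by omega
        have hj2 : j ≤ k := by omega
        obtain ⟨a', b', hab', ha', hb', hfb⟩ := fB_isBase h z hj1 hj2
        rw [hfb]
        have : a' = a ∧ b' = b := by
          obtain ⟨q1, q2, q3, q4⟩ := hab'
          exact ⟨Fin.ext (by omega), Fin.ext (by omega)⟩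
        rw [this.1, this.2]
  · rintro (⟨x, hx, rfl⟩ | ⟨j, hj, rfl⟩)
    · exact Or.inl ⟨x, (Finset.mem_erase.mp hx).1, rfl⟩
    · rw [Finset.mem_Icc] at hj
      obtain ⟨a, b, hab, -, -, hfb⟩ := fB_isBase h z hj.1 hj.2
      exact Or.inr ⟨a, b, hab, hfb⟩

lemma card_edge_c0 (h : 2*k + 1 ≤ n) {z : Fin n} (hz : z.val = 0) :
    (C0 n k).edgeSet.ncard = n - 1 + k := by
  rw [← SimpleGraph.coe_edgeFinset, Set.ncard_coe_finset, edgeFinset_c0 h hz]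
  have hdisj : Disjoint ((univ.erase z).image (fun x => s(z, x)))
      ((Finset.Icc 1 k).image (fB n z)) := by
    rw [Finset.disjoint_left]
    rintro e he1 he2
    rw [Finset.mem_image] at he1 he2
    obtain ⟨x, hx, rfl⟩ := he1
    obtain ⟨j, hj, hfb⟩ := he2
    rw [Finset.mem_Icc] at hj
    obtain ⟨a, b, hab, -, -, hfb'⟩ := fB_isBase h z hj.1 hj.2
    exact spoke_ne_base hz hab (hfb' ▸ hfb.symm)
  rw [Finset.card_union_of_disjoint hdisj]
  have hc1 : ((univ.erase z).image (fun x => s(z, x))).card = n - 1 := by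
    rw [Finset.card_image_of_injOn, Finset.card_erase_of_mem (Finset.mem_univ z)]
    · simp
    · intro x hx y hy hxy
      rw [Sym2.eq_iff] at hxy
      rcases hxy with ⟨-, h2⟩ | ⟨h1, h2⟩
      · exact h2
      · rw [h2, ← h1]
  have hc2 : ((Finset.Icc 1 k).image (fB n z)).card = k := by
    rw [Finset.card_image_of_injOn]
    · simp
    · intro i hi j hj hij
      rw [Finset.mem_coe, Finset.mem_Icc] at hi hj
      obtain ⟨a, b, hab, ha, hb, hfa⟩ := fB_isBase h z hi.1 hi.2
      obtain ⟨a', b', hab', ha', hb', hfb⟩ := fB_isBase h z hj.1 hj.2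
      rw [hfa, hfb, Sym2.eq_iff] at hij
      rcases hij with ⟨h1, h2⟩ | ⟨h1, h2⟩
      · have := congrArg Fin.val h2
        omega
      · have := congrArg Fin.val h1
        have := congrArg Fin.val h2
        omega
  omega

lemma exists_base_of (h : 2*k + 1 ≤ n) {x : Fin n} (hx1 : 1 ≤ x.val)
    (hx2 : x.val ≤ 2*k) : ∃ a b : Fin n, IsBase n k a b ∧ (x = a ∨ x = b) := by
  by_cases hodd : x.val % 2 = 1
  · exact ⟨x, ⟨x.val + 1, by omega⟩, ⟨hx1, hodd, by simp, by simp; omega⟩, Or.inl rfl⟩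
  · refine ⟨⟨x.val - 1, by omega⟩, x, ⟨by simp; omega, by simp; omega, by simp; omega,
      by omega⟩, Or.inr rfl⟩

lemma szE_c0 (h : 2*k + 1 ≤ n) : szE (C0 n k) = (n - 1 + k - 2) * (2*k) + k := by
  have hn : 0 < n := by omega
  set z : Fin n := ⟨0, hn⟩ with hzdef
  have hz : z.val = 0 := rfl
  have hdisj : Disjoint ((univ.erase z).image (fun x => s(z, x)))
      ((Finset.Icc 1 k).image (fB n z)) := by
    rw [Finset.disjoint_left]
    rintro e he1 he2
    rw [Finset.mem_image] at he1 he2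
    obtain ⟨x, hx, rfl⟩ := he1
    obtain ⟨j, hj, hfb⟩ := he2
    rw [Finset.mem_Icc] at hj
    obtain ⟨a, b, hab, -, -, hfb'⟩ := fB_isBase h z hj.1 hj.2
    exact spoke_ne_base hz hab (hfb' ▸ hfb.symm)
  rw [szE, edgeFinset_c0 h hz, Finset.sum_union hdisj]
  have hS : ∑ e ∈ (univ.erase z).image (fun x => s(z, x)),
      Sym2.lift ⟨fun u v => szM (C0 n k) u v * szM (C0 n k) v u,
        fun u v => mul_comm _ _⟩ e = (n - 1 + k - 2) * (2*k) := by
    rw [Finset.sum_image]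
    · have hcong : ∀ x ∈ univ.erase z,
          Sym2.lift ⟨fun u v => szM (C0 n k) u v * szM (C0 n k) v u,
            fun u v => mul_comm _ _⟩ (s(z, x)) =
          if x.val ≤ 2*k then (n - 1 + k - 2) else 0 := by
        intro x hx
        have hxz : x ≠ z := (Finset.mem_erase.mp hx).1
        have hx1 : 1 ≤ x.val := by
          rcases Nat.eq_zero_or_pos x.val with h0 | h0
          · exact absurd (Fin.ext (h0.trans hz.symm)) hxz
          · exact h0
        rw [Sym2.lift_mk]
        dsimp only
        by_cases hx2 : x.val ≤ 2*k
        · obtain ⟨a, b, hab, hw⟩ := exists_base_of h hx1 hx2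
          rw [szM_tri hz hab hw, szM_z_tri hz hab hw, card_edge_c0 h hz, if_pos hx2]
          ring
        · rw [szM_pendant hz (by omega), if_neg hx2]
          ring
      rw [Finset.sum_congr rfl hcong, ← Finset.sum_filter]
      rw [Finset.sum_const, smul_eq_mul]
      have hcard : ((univ.erase z).filter (fun x : Fin n => x.val ≤ 2*k)).card = 2*k := by
        rw [show ((univ.erase z).filter (fun x : Fin n => x.val ≤ 2*k)) =
            (univ.filter (fun x : Fin n => 1 ≤ x.val ∧ x.val ≤ 2*k)) from ?_]
        · refine Finset.card_bij' (fun x _ => x.val)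
            (fun v hv => ⟨v, by rw [Finset.mem_Icc] at *; omega⟩ : ∀ v ∈ Finset.Icc 1 (2*k), Fin n)
            ?_ ?_ ?_ ?_ |>.trans (by rw [Nat.card_Icc]; omega)
          · intro a ha
            rw [Finset.mem_filter] at ha
            rw [Finset.mem_Icc]
            exact ha.2
          · intro v hv
            rw [Finset.mem_Icc] at hv
            rw [Finset.mem_filter]
            exact ⟨Finset.mem_univ _, by simpa using hv⟩
          · intro a ha
            exact Fin.ext rfl
          · intro v hv
            rfl
        · ext x
          simp only [Finset.mem_filter, Finset.mem_erase, Finset.mem_univ, true_and]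
          constructor
          · rintro ⟨⟨h1, -⟩, h2⟩
            refine ⟨?_, h2⟩
            rcases Nat.eq_zero_or_pos x.val with h0 | h0
            · exact absurd (Fin.ext (h0.trans hz.symm)) h1
            · exact h0
          · rintro ⟨h1, h2⟩
            refine ⟨⟨fun hc => ?_, trivial⟩, h2⟩
            rw [hc, hz] at h1
            omega
      rw [hcard]
      ring
    · intro x hx y hy hxy
      rw [Sym2.eq_iff] at hxy
      rcases hxy with ⟨-, h2⟩ | ⟨h1, h2⟩
      · exact h2
      · rw [h2, ← h1]
  have hB : ∑ e ∈ (Finset.Icc 1 k).image (fB n z),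
      Sym2.lift ⟨fun u v => szM (C0 n k) u v * szM (C0 n k) v u,
        fun u v => mul_comm _ _⟩ e = k := by
    rw [Finset.sum_image]
    · have hcong : ∀ j ∈ Finset.Icc 1 k,
          Sym2.lift ⟨fun u v => szM (C0 n k) u v * szM (C0 n k) v u,
            fun u v => mul_comm _ _⟩ (fB n z j) = 1 := by
        intro j hj
        rw [Finset.mem_Icc] at hj
        obtain ⟨a, b, hab, -, -, hfb⟩ := fB_isBase h z hj.1 hj.2
        rw [hfb, Sym2.lift_mk]
        dsimp only
        rw [szM_base hz hab (Or.inl ⟨rfl, rfl⟩),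
          szM_base hz hab (Or.inr ⟨rfl, rfl⟩)]
      rw [Finset.sum_congr rfl hcong, Finset.sum_const, Nat.card_Icc, smul_eq_mul]
      omega
    · intro i hi j hj hij
      rw [Finset.mem_coe, Finset.mem_Icc] at hi hj
      obtain ⟨a, b, hab, ha, hb, hfa⟩ := fB_isBase h z hi.1 hi.2
      obtain ⟨a', b', hab', ha', hb', hfb⟩ := fB_isBase h z hj.1 hj.2
      rw [hfa, hfb, Sym2.eq_iff] at hij
      rcases hij with ⟨h1, h2⟩ | ⟨h1, h2⟩
      · have := congrArg Fin.val h2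
        omega
      · have := congrArg Fin.val h1
        have := congrArg Fin.val h2
        omega
  rw [hS, hB]


/-- For integers `n ≥ 2k + 1` and `k ≥ 0`, the edge Szeged index of `C₀(n,k)`
equals `2kn + 2k² - 5k`. -/
theorem edge_szeged_C0 (n k : ℕ) (h : 2*k + 1 ≤ n) (hk : 0 ≤ k) :
    (szE (C0 n k) : ℤ) = 2*k*n + 2*k^2 - 5*k := by
  rw [szE_c0 h]
  rcases Nat.eq_zero_or_pos k with rfl | hk1
  · norm_num
  · have hn3 : 3 ≤ n := by omega
    have hm : ((n - 1 + k - 2 : ℕ) : ℤ) = (n : ℤ) + k - 3 := by omega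
    push_cast
    rw [hm]
    ring
end
end

section
/- For integers n and k with n ≥ 2k + 1 and k ≥ 0, the edge-vertex Szeged index of C_0(n,k) equals (1/2)(n² − 3n + 3kn − 5k + 2). -/
open SimpleGraph Finset
open scoped Classical

noncomputable section

variable {V : Type*}

namespace C0Aux

variable {n k : ℕ} [NeZero n]

lemma adj_iff {a b : Fin n} : (C0 n k).Adj a b ↔ a ≠ b ∧ (a.val = 0 ∨ b.val = 0 ∨
    (a.val ≤ 2*k ∧ b.val ≤ 2*k ∧ (a.val + 1)/2 = (b.val + 1)/2)) := Iff.rfl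

lemma ne_zero_iff {a : Fin n} : a ≠ 0 ↔ 1 ≤ a.val := by
  simp only [ne_eq, Fin.ext_iff, Fin.val_zero, Fin.val_zero]; omega

lemma adj_zero {x : Fin n} (hx : x ≠ 0) : (C0 n k).Adj 0 x :=
  ⟨hx.symm, Or.inl (Fin.val_zero n)⟩

lemma dist_eq (a b : Fin n) :
    (C0 n k).dist a b = if a = b then 0 else if (C0 n k).Adj a b then 1 else 2 := by
  split_ifs with h1 h2
  · subst h1; exact SimpleGraph.dist_self
  · exact SimpleGraph.dist_eq_one_iff_adj.mpr h2
  · have ha : a ≠ 0 := by rintro rfl; exact h2 (adj_zero (Ne.symm h1))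
    have hb : b ≠ 0 := by rintro rfl; exact h2 ((adj_zero ha).symm)
    have h3 := SimpleGraph.dist_le (G := C0 n k) (SimpleGraph.Walk.cons (adj_zero ha).symm
        (SimpleGraph.Walk.cons (adj_zero hb) SimpleGraph.Walk.nil))
    simp only [SimpleGraph.Walk.length_cons, SimpleGraph.Walk.length_nil] at h3
    have h4 : (C0 n k).dist a b ≠ 0 :=
      fun hz => h1 ((SimpleGraph.Reachable.dist_eq_zero_iff
        ⟨SimpleGraph.Walk.cons (adj_zero ha).symm
          (SimpleGraph.Walk.cons (adj_zero hb) SimpleGraph.Walk.nil)⟩).mp hz)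
    have h5 : (C0 n k).dist a b ≠ 1 :=
      fun ho => h2 (SimpleGraph.dist_eq_one_iff_adj.mp ho)
    omega

/-- the partner of a triangle vertex -/
def pa (t : Fin n) : Fin n :=
  ⟨(if t.val % 2 = 1 then t.val + 1 else t.val - 1) % n, Nat.mod_lt _ (NeZero.pos n)⟩

lemma pa_spec (h : 2*k+1 ≤ n) {t : Fin n} (h1 : 1 ≤ t.val) (h2 : t.val ≤ 2*k) :
    ((pa t).val = t.val + 1 ∧ t.val % 2 = 1) ∨ ((pa t).val = t.val - 1 ∧ t.val % 2 = 0) := by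
  have hval : (pa t).val = (if t.val % 2 = 1 then t.val + 1 else t.val - 1) % n := rfl
  by_cases hp : t.val % 2 = 1
  · left
    rw [hval, if_pos hp]
    exact ⟨Nat.mod_eq_of_lt (by omega), hp⟩
  · right
    rw [hval, if_neg hp]
    exact ⟨Nat.mod_eq_of_lt (by omega), by omega⟩

lemma pa_bounds (h : 2*k+1 ≤ n) {t : Fin n} (h1 : 1 ≤ t.val) (h2 : t.val ≤ 2*k) :
    1 ≤ (pa t).val ∧ (pa t).val ≤ 2*k ∧ (pa t).val ≠ t.val ∧
      ((pa t).val + 1)/2 = (t.val + 1)/2 := by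
  rcases pa_spec h h1 h2 with ⟨hv, hp⟩ | ⟨hv, hp⟩ <;> omega

lemma pa_pa (h : 2*k+1 ≤ n) {t : Fin n} (h1 : 1 ≤ t.val) (h2 : t.val ≤ 2*k) :
    pa (pa t) = t := by
  obtain ⟨b1, b2, b3, b4⟩ := pa_bounds h h1 h2
  apply Fin.ext
  rcases pa_spec h h1 h2 with ⟨hv, hp⟩ | ⟨hv, hp⟩ <;>
    rcases pa_spec (t := pa t) h b1 b2 with ⟨hv2, hp2⟩ | ⟨hv2, hp2⟩ <;> omega

lemma pa_ne_zero (h : 2*k+1 ≤ n) {t : Fin n} (h1 : 1 ≤ t.val) (h2 : t.val ≤ 2*k) :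
    pa t ≠ 0 := ne_zero_iff.mpr (pa_bounds h h1 h2).1

lemma pa_ne (h : 2*k+1 ≤ n) {t : Fin n} (h1 : 1 ≤ t.val) (h2 : t.val ≤ 2*k) :
    pa t ≠ t := fun he => (pa_bounds h h1 h2).2.2.1 (congrArg Fin.val he)

lemma adj_pa (h : 2*k+1 ≤ n) {t : Fin n} (h1 : 1 ≤ t.val) (h2 : t.val ≤ 2*k) :
    (C0 n k).Adj t (pa t) := by
  obtain ⟨b1, b2, b3, b4⟩ := pa_bounds h h1 h2
  exact ⟨fun he => b3 (congrArg Fin.val he).symm, Or.inr (Or.inr ⟨h2, b2, b4.symm⟩)⟩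

lemma adj_pendant {x w : Fin n} (hx : 2*k+1 ≤ x.val) : (C0 n k).Adj x w ↔ w = 0 := by
  constructor
  · rintro ⟨hne, hc | hc | ⟨hc1, -⟩⟩
    · omega
    · exact Fin.ext (by simpa using hc)
    · omega
  · rintro rfl
    exact ⟨ne_zero_iff.mpr (by omega), Or.inr (Or.inl (Fin.val_zero n))⟩

lemma adj_tri (h : 2*k+1 ≤ n) {t w : Fin n} (h1 : 1 ≤ t.val) (h2 : t.val ≤ 2*k) :
    (C0 n k).Adj t w ↔ w = 0 ∨ w = pa t := by
  obtain ⟨b1, b2, b3, b4⟩ := pa_bounds h h1 h2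
  constructor
  · rintro ⟨hne, hc | hc | ⟨-, hc2, hc3⟩⟩
    · omega
    · exact Or.inl (Fin.ext (by simpa using hc))
    · refine Or.inr (Fin.ext ?_)
      have hwne : w.val ≠ t.val := fun he => hne (Fin.ext he.symm)
      omega
  · rintro (rfl | rfl)
    · exact (adj_zero (ne_zero_iff.mpr h1)).symm
    · exact adj_pa h h1 h2

end C0Aux

namespace Part2
open C0Aux
variable {n k : ℕ} [NeZero n]

lemma dist_zero' (w : Fin n) : (C0 n k).dist 0 w = if w = 0 then 0 else 1 := by
  rw [dist_eq]
  by_cases h1 : w = 0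
  · simp [h1]
  · rw [if_neg (fun h => h1 h.symm), if_pos (adj_zero h1), if_neg h1]

lemma dist_pend {x : Fin n} (hx : 2*k+1 ≤ x.val) (w : Fin n) :
    (C0 n k).dist x w = if w = x then 0 else if w = 0 then 1 else 2 := by
  rw [dist_eq]
  by_cases h1 : w = x
  · simp [h1]
  · rw [if_neg (fun h => h1 h.symm), if_neg h1]
    by_cases h2 : w = 0
    · rw [if_pos ((adj_pendant hx).mpr h2), if_pos h2]
    · rw [if_neg (fun ha => h2 ((adj_pendant hx).mp ha)), if_neg h2]

lemma dist_tri (h : 2*k+1 ≤ n) {t : Fin n} (h1 : 1 ≤ t.val) (h2 : t.val ≤ 2*k) (w : Fin n) :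
    (C0 n k).dist t w = if w = t then 0 else if w = 0 ∨ w = pa t then 1 else 2 := by
  rw [dist_eq]
  by_cases ha : w = t
  · simp [ha]
  · rw [if_neg (fun hh => ha hh.symm), if_neg ha]
    by_cases hb : w = 0 ∨ w = pa t
    · rw [if_pos ((adj_tri h h1 h2).mpr hb), if_pos hb]
    · rw [if_neg (fun hc => hb ((adj_tri h h1 h2).mp hc)), if_neg hb]

set_option maxHeartbeats 1000000 in
lemma szN_set_eq (G : SimpleGraph (Fin n)) (u v : Fin n) (X : Finset (Fin n))
    (hset : {w : Fin n | G.dist u w < G.dist v w} = (X : Set (Fin n))) :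
    szN G u v = X.card := by
  rw [szN, hset, Set.ncard_coe_finset]

lemma szN_z_pend (h : 2*k+1 ≤ n) {p : Fin n} (hp : 2*k+1 ≤ p.val) :
    szN (C0 n k) 0 p = n - 1 := by
  rw [szN_set_eq (C0 n k) 0 p (univ.erase p) ?_,
    Finset.card_erase_of_mem (mem_univ p), Finset.card_univ, Fintype.card_fin]
  ext w
  simp only [Set.mem_setOf_eq, Finset.coe_erase, Finset.coe_univ, Set.mem_diff,
    Set.mem_univ, true_and, Set.mem_singleton_iff]
  rw [dist_zero', dist_pend hp]
  simp only [Fin.ext_iff, Fin.val_zero, Fin.val_zero, true_or, or_true, if_true]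
  split_ifs <;> omega

lemma szN_pend_z (h : 2*k+1 ≤ n) {p : Fin n} (hp : 2*k+1 ≤ p.val) :
    szN (C0 n k) p 0 = 1 := by
  rw [szN_set_eq (C0 n k) p 0 {p} ?_, Finset.card_singleton]
  ext w
  simp only [Set.mem_setOf_eq, Finset.coe_singleton, Set.mem_singleton_iff]
  rw [dist_zero', dist_pend hp]
  simp only [Fin.ext_iff, Fin.val_zero, Fin.val_zero, true_or, or_true, if_true]
  split_ifs <;> omega

lemma szN_z_tri (h : 2*k+1 ≤ n) {t : Fin n} (h1 : 1 ≤ t.val) (h2 : t.val ≤ 2*k) :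
    szN (C0 n k) 0 t = n - 2 := by
  obtain ⟨b1, b2, b3, b4⟩ := pa_bounds h h1 h2
  rw [szN_set_eq (C0 n k) 0 t (univ \ {t, pa t}) ?_,
    Finset.card_sdiff_of_subset (Finset.subset_univ _), Finset.card_univ, Fintype.card_fin,
    Finset.card_insert_of_notMem (by simpa using fun hh : t = pa t => b3 (congrArg Fin.val hh).symm),
    Finset.card_singleton]
  ext w
  simp only [Set.mem_setOf_eq, Finset.coe_sdiff, Finset.coe_univ, Finset.coe_insert,
    Finset.coe_singleton, Set.mem_diff, Set.mem_univ, true_and, Set.mem_insert_iff,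
    Set.mem_singleton_iff]
  rw [dist_zero', dist_tri h h1 h2]
  simp only [Fin.ext_iff, Fin.val_zero, Fin.val_zero, true_or, or_true, if_true]
  split_ifs <;> omega

lemma szN_tri_z (h : 2*k+1 ≤ n) {t : Fin n} (h1 : 1 ≤ t.val) (h2 : t.val ≤ 2*k) :
    szN (C0 n k) t 0 = 1 := by
  obtain ⟨b1, b2, b3, b4⟩ := pa_bounds h h1 h2
  rw [szN_set_eq (C0 n k) t 0 {t} ?_, Finset.card_singleton]
  ext w
  simp only [Set.mem_setOf_eq, Finset.coe_singleton, Set.mem_singleton_iff]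
  rw [dist_zero', dist_tri h h1 h2]
  simp only [Fin.ext_iff, Fin.val_zero, Fin.val_zero, true_or, or_true, if_true]
  split_ifs <;> omega

lemma szN_tri_pa (h : 2*k+1 ≤ n) {t : Fin n} (h1 : 1 ≤ t.val) (h2 : t.val ≤ 2*k) :
    szN (C0 n k) t (pa t) = 1 := by
  obtain ⟨b1, b2, b3, b4⟩ := pa_bounds h h1 h2
  rw [szN_set_eq (C0 n k) t (pa t) {t} ?_, Finset.card_singleton]
  ext w
  simp only [Set.mem_setOf_eq, Finset.coe_singleton, Set.mem_singleton_iff]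
  rw [dist_tri h h1 h2, dist_tri h b1 b2, pa_pa h h1 h2]
  simp only [Fin.ext_iff, Fin.val_zero, Fin.val_zero, true_or, or_true, if_true]
  split_ifs <;> omega


lemma eDist_mk (G : SimpleGraph (Fin n)) (a b w : Fin n) :
    eDist G s(a,b) w = min (G.dist a w) (G.dist b w) := rfl

lemma edge_cases (h : 2*k+1 ≤ n) {f : Sym2 (Fin n)} (hf : f ∈ (C0 n k).edgeSet) :
    (∃ x : Fin n, x ≠ 0 ∧ f = s(0, x)) ∨
    (∃ t : Fin n, t.val % 2 = 1 ∧ t.val < 2*k ∧ f = s(t, pa t)) := by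
  induction f with | _ a b =>
  rw [SimpleGraph.mem_edgeSet] at hf
  obtain ⟨hne, hc⟩ := hf
  have hne' : a.val ≠ b.val := fun he => hne (Fin.ext he)
  rcases hc with hc | hc | ⟨hc1, hc2, hc3⟩
  · exact Or.inl ⟨b, fun hb0 => hne' (by rw [hc, hb0, Fin.val_zero]),
      by rw [show a = (0 : Fin n) from Fin.ext (by simpa using hc)]⟩
  · refine Or.inl ⟨a, fun ha0 => hne' (by rw [hc, ha0, Fin.val_zero]), ?_⟩
    rw [show b = (0 : Fin n) from Fin.ext (by simpa using hc), Sym2.eq_swap]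
  · have ha1 : 1 ≤ a.val := by omega
    have hb1 : 1 ≤ b.val := by omega
    by_cases hodd : a.val % 2 = 1
    · refine Or.inr ⟨a, hodd, by omega, ?_⟩
      have hb : b = pa a := Fin.ext (by rcases pa_spec h ha1 hc1 with ⟨hv,hp⟩|⟨hv,hp⟩ <;> omega)
      rw [hb]
    · have hbodd : b.val % 2 = 1 := by omega
      refine Or.inr ⟨b, hbodd, by omega, ?_⟩
      have hab : a = pa b := Fin.ext (by rcases pa_spec h hb1 hc2 with ⟨hv,hp⟩|⟨hv,hp⟩ <;> omega)
      rw [hab, Sym2.eq_swap]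

lemma star_mem {x : Fin n} (hx : x ≠ 0) : s((0:Fin n), x) ∈ (C0 n k).edgeSet :=
  (SimpleGraph.mem_edgeSet _).mpr (adj_zero hx)

lemma tri_mem (h : 2*k+1 ≤ n) {t : Fin n} (h1 : 1 ≤ t.val) (h2 : t.val ≤ 2*k) :
    s(t, pa t) ∈ (C0 n k).edgeSet :=
  (SimpleGraph.mem_edgeSet _).mpr (adj_pa h h1 h2)

lemma edgeFinset_eq (h : 2*k+1 ≤ n) : (C0 n k).edgeFinset =
    ((univ.filter (fun x : Fin n => x ≠ 0)).image fun x => s((0:Fin n), x)) ∪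
    ((univ.filter (fun t : Fin n => t.val % 2 = 1 ∧ t.val < 2*k)).image fun t => s(t, pa t)) := by
  ext f
  rw [SimpleGraph.mem_edgeFinset, Finset.mem_union]
  constructor
  · intro hf
    rcases edge_cases h hf with ⟨x, hx, rfl⟩ | ⟨t, ht1, ht2, rfl⟩
    · exact Or.inl (Finset.mem_image.mpr ⟨x, by simp [hx], rfl⟩)
    · exact Or.inr (Finset.mem_image.mpr ⟨t, by simp [ht1, ht2], rfl⟩)
  · rintro (hf | hf)
    · obtain ⟨x, hx, rfl⟩ := Finset.mem_image.mp hf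
      exact star_mem (by simpa using (Finset.mem_filter.mp hx).2)
    · obtain ⟨t, ht, rfl⟩ := Finset.mem_image.mp hf
      obtain ⟨-, ht1, ht2⟩ := Finset.mem_filter.mp ht
      exact tri_mem h (by omega) (by omega)

lemma card_star_filter : (univ.filter (fun x : Fin n => x ≠ 0)).card = n - 1 := by
  have hset : (univ.filter (fun x : Fin n => x ≠ 0)) = univ.erase 0 := by
    ext x; simp [Finset.mem_erase]
  rw [hset, Finset.card_erase_of_mem (mem_univ 0), Finset.card_univ, Fintype.card_fin]

lemma card_odd_filter (h : 2*k+1 ≤ n) :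
    (univ.filter (fun t : Fin n => t.val % 2 = 1 ∧ t.val < 2*k)).card = k := by
  refine (Finset.card_bij' (t := Finset.range k) (fun t _ => t.val / 2)
    (fun m _ => ⟨(2*m+1) % n, Nat.mod_lt _ (NeZero.pos n)⟩) ?_ ?_ ?_ ?_).trans
    (Finset.card_range k)
  · intro t ht
    obtain ⟨-, ht1, ht2⟩ := Finset.mem_filter.mp ht
    exact Finset.mem_range.mpr (show t.val / 2 < k by omega)
  · intro m hm
    rw [Finset.mem_range] at hm
    have hmod : (2*m+1) % n = 2*m+1 := Nat.mod_eq_of_lt (by omega)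
    exact Finset.mem_filter.mpr ⟨mem_univ _, by simp only [hmod]; omega, by simp only [hmod]; omega⟩
  · intro t ht
    obtain ⟨-, ht1, ht2⟩ := Finset.mem_filter.mp ht
    have ht3 := t.isLt
    exact Fin.ext (by simp only []; rw [Nat.mod_eq_of_lt (by omega)]; omega)
  · intro m hm
    rw [Finset.mem_range] at hm
    simp only []
    rw [Nat.mod_eq_of_lt (by omega)]
    omega

lemma disj_star_tri (h : 2*k+1 ≤ n) :
    Disjoint ((univ.filter (fun x : Fin n => x ≠ 0)).image fun x => s((0:Fin n), x))
      ((univ.filter (fun t : Fin n => t.val % 2 = 1 ∧ t.val < 2*k)).image fun t => s(t, pa t)) := by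
  rw [Finset.disjoint_left]
  rintro f hf1 hf2
  obtain ⟨x, hx, rfl⟩ := Finset.mem_image.mp hf1
  obtain ⟨t, ht, hft⟩ := Finset.mem_image.mp hf2
  obtain ⟨-, ht1, ht2⟩ := Finset.mem_filter.mp ht
  obtain ⟨b1, b2, b3, b4⟩ := pa_bounds h (t := t) (by omega) (by omega)
  rcases Sym2.eq_iff.mp hft with ⟨h1, -⟩ | ⟨-, h2⟩
  · have := congrArg Fin.val h1
    rw [Fin.val_zero] at this
    omega
  · have := congrArg Fin.val h2
    rw [Fin.val_zero] at this
    omega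

lemma card_edgeFinset (h : 2*k+1 ≤ n) : (C0 n k).edgeFinset.card = n - 1 + k := by
  rw [edgeFinset_eq h, Finset.card_union_of_disjoint (disj_star_tri h),
    Finset.card_image_of_injOn, Finset.card_image_of_injOn, card_star_filter,
    card_odd_filter h]
  · intro t ht u hu he
    simp only [Finset.coe_filter, Set.mem_setOf_eq] at ht hu
    obtain ⟨-, ht1, ht2⟩ := ht
    obtain ⟨-, hu1, hu2⟩ := hu
    obtain ⟨c1, c2, c3, c4⟩ := pa_bounds h (t := u) (by omega) (by omega)
    rcases pa_spec h (t := u) (by omega) (by omega) with ⟨hv, -⟩ | ⟨-, hp⟩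
    · rcases Sym2.eq_iff.mp he with ⟨h1, -⟩ | ⟨h1, h2⟩
      · exact h1
      · have e1 := congrArg Fin.val h1
        exact absurd e1 (by omega)
    · omega
  · intro x hx y hy he
    simp only [Finset.coe_filter, Set.mem_setOf_eq] at hx hy
    rcases Sym2.eq_iff.mp he with ⟨-, h2⟩ | ⟨h1, -⟩
    · exact h2
    · exact absurd h1.symm hy.2

lemma ncard_edgeSet (h : 2*k+1 ≤ n) : (C0 n k).edgeSet.ncard = n - 1 + k := by
  rw [← card_edgeFinset h, SimpleGraph.edgeFinset, Set.ncard_eq_toFinset_card']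



lemma szM_pend_z (h : 2*k+1 ≤ n) {p : Fin n} (hp : 2*k+1 ≤ p.val) :
    szM (C0 n k) p 0 = 0 := by
  have hset : {e | e ∈ (C0 n k).edgeSet ∧ eDist (C0 n k) e p < eDist (C0 n k) e 0} = ∅ := by
    rw [Set.eq_empty_iff_forall_notMem]
    rintro f ⟨hf, hlt⟩
    rcases edge_cases h hf with ⟨x, hx, rfl⟩ | ⟨t, ht1, ht2, rfl⟩
    · have hx1 := ne_zero_iff.mp hx
      rw [eDist_mk, eDist_mk, SimpleGraph.dist_comm (G := C0 n k) (u := x) (v := p),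
        SimpleGraph.dist_comm (G := C0 n k) (u := x) (v := 0),
        dist_pend hp x, dist_zero' p, dist_zero' x, dist_zero' (0 : Fin n)] at hlt
      simp only [Fin.ext_iff, Fin.val_zero, Fin.val_zero, true_or, or_true, if_true] at hlt
      split_ifs at hlt <;> omega
    · have h1 : 1 ≤ t.val := by omega
      have h2 : t.val ≤ 2*k := by omega
      obtain ⟨b1, b2, b3, b4⟩ := pa_bounds h h1 h2
      rw [eDist_mk, eDist_mk, SimpleGraph.dist_comm (G := C0 n k) (u := t) (v := p),
        SimpleGraph.dist_comm (G := C0 n k) (u := pa t) (v := p),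
        dist_pend hp t, dist_pend hp (pa t),
        dist_tri h h1 h2 0, dist_tri h b1 b2 0] at hlt
      simp only [Fin.ext_iff, Fin.val_zero, Fin.val_zero, true_or, or_true, if_true] at hlt
      split_ifs at hlt <;> omega
  rw [szM, hset, Set.ncard_empty]

lemma szM_z_pend (h : 2*k+1 ≤ n) {p : Fin n} (hp : 2*k+1 ≤ p.val) :
    szM (C0 n k) 0 p = n - 1 + k - 1 := by
  have hp0 : p ≠ 0 := ne_zero_iff.mpr (by omega)
  have hset : {e | e ∈ (C0 n k).edgeSet ∧ eDist (C0 n k) e 0 < eDist (C0 n k) e p}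
      = (C0 n k).edgeSet \ {s((0:Fin n), p)} := by
    ext f
    simp only [Set.mem_setOf_eq, Set.mem_diff, Set.mem_singleton_iff]
    constructor
    · rintro ⟨hf, hlt⟩
      refine ⟨hf, ?_⟩
      rintro rfl
      rw [eDist_mk, eDist_mk, SimpleGraph.dist_comm (G := C0 n k) (u := p) (v := 0),
        dist_zero' (0 : Fin n), dist_zero' p, dist_pend hp p] at hlt
      simp only [Fin.ext_iff, Fin.val_zero, Fin.val_zero, true_or, or_true, if_true] at hlt
      split_ifs at hlt <;> omega
    · rintro ⟨hf, hne⟩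
      refine ⟨hf, ?_⟩
      rcases edge_cases h hf with ⟨x, hx, rfl⟩ | ⟨t, ht1, ht2, rfl⟩
      · have hx1 := ne_zero_iff.mp hx
        have hxp : x.val ≠ p.val := fun he => hne (by rw [Fin.ext he])
        rw [eDist_mk, eDist_mk, SimpleGraph.dist_comm (G := C0 n k) (u := x) (v := 0),
          SimpleGraph.dist_comm (G := C0 n k) (u := x) (v := p),
          dist_pend hp x, dist_zero' p, dist_zero' x, dist_zero' (0 : Fin n)]
        simp only [Fin.ext_iff, Fin.val_zero, Fin.val_zero, true_or, or_true, if_true]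
        split_ifs <;> omega
      · have h1 : 1 ≤ t.val := by omega
        have h2 : t.val ≤ 2*k := by omega
        obtain ⟨b1, b2, b3, b4⟩ := pa_bounds h h1 h2
        rw [eDist_mk, eDist_mk, SimpleGraph.dist_comm (G := C0 n k) (u := t) (v := p),
          SimpleGraph.dist_comm (G := C0 n k) (u := pa t) (v := p),
          dist_pend hp t, dist_pend hp (pa t),
          dist_tri h h1 h2 0, dist_tri h b1 b2 0]
        simp only [Fin.ext_iff, Fin.val_zero, Fin.val_zero, true_or, or_true, if_true]
        split_ifs <;> omega
  rw [szM, hset, Set.ncard_diff_singleton_of_mem (star_mem hp0),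
    ncard_edgeSet h]

lemma szM_tri_z (h : 2*k+1 ≤ n) {t : Fin n} (h1 : 1 ≤ t.val) (h2 : t.val ≤ 2*k) :
    szM (C0 n k) t 0 = 1 := by
  obtain ⟨b1, b2, b3, b4⟩ := pa_bounds h h1 h2
  have hset : {e | e ∈ (C0 n k).edgeSet ∧ eDist (C0 n k) e t < eDist (C0 n k) e 0}
      = {s(t, pa t)} := by
    ext f
    simp only [Set.mem_setOf_eq, Set.mem_singleton_iff]
    constructor
    · rintro ⟨hf, hlt⟩
      rcases edge_cases h hf with ⟨x, hx, rfl⟩ | ⟨u, hu1, hu2, rfl⟩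
      · exfalso
        have hx1 := ne_zero_iff.mp hx
        rw [eDist_mk, eDist_mk, SimpleGraph.dist_comm (G := C0 n k) (u := x) (v := t),
          SimpleGraph.dist_comm (G := C0 n k) (u := x) (v := 0),
          dist_tri h h1 h2 x, dist_zero' t, dist_zero' x, dist_zero' (0 : Fin n)] at hlt
        simp only [Fin.ext_iff, Fin.val_zero, Fin.val_zero, true_or, or_true, if_true] at hlt
        split_ifs at hlt <;> omega
      · have hu1' : 1 ≤ u.val := by omega
        have hu2' : u.val ≤ 2*k := by omega
        obtain ⟨c1, c2, c3, c4⟩ := pa_bounds h hu1' hu2'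
        have key : t.val = u.val ∨ t.val = (pa u).val := by
          rw [eDist_mk, eDist_mk, SimpleGraph.dist_comm (G := C0 n k) (u := u) (v := t),
            SimpleGraph.dist_comm (G := C0 n k) (u := pa u) (v := t),
            dist_tri h h1 h2 u, dist_tri h h1 h2 (pa u),
            dist_tri h hu1' hu2' 0, dist_tri h c1 c2 0] at hlt
          simp only [Fin.ext_iff, Fin.val_zero, Fin.val_zero, true_or, or_true, if_true] at hlt
          split_ifs at hlt <;> omega
        rcases key with he | he
        · have : u = t := Fin.ext he.symm
          subst this
          rfl
        · have hpt : pa u = t := Fin.ext he.symm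
          rw [← hpt, pa_pa h hu1' hu2']
          exact Sym2.eq_swap
    · rintro rfl
      refine ⟨tri_mem h h1 h2, ?_⟩
      rw [eDist_mk, eDist_mk, dist_tri h h1 h2 t, dist_tri h b1 b2 t,
        dist_tri h h1 h2 0, dist_tri h b1 b2 0, pa_pa h h1 h2]
      simp only [Fin.ext_iff, Fin.val_zero, Fin.val_zero, true_or, or_true, if_true]
      split_ifs <;> omega
  rw [szM, hset, Set.ncard_singleton]

lemma szM_z_tri (h : 2*k+1 ≤ n) {t : Fin n} (h1 : 1 ≤ t.val) (h2 : t.val ≤ 2*k) :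
    szM (C0 n k) 0 t = n - 1 + k - 2 := by
  obtain ⟨b1, b2, b3, b4⟩ := pa_bounds h h1 h2
  have ht0 : t ≠ 0 := ne_zero_iff.mpr h1
  have hset : {e | e ∈ (C0 n k).edgeSet ∧ eDist (C0 n k) e 0 < eDist (C0 n k) e t}
      = (C0 n k).edgeSet \ {s((0:Fin n), t), s(t, pa t)} := by
    ext f
    simp only [Set.mem_setOf_eq, Set.mem_diff, Set.mem_insert_iff, Set.mem_singleton_iff,
      not_or]
    constructor
    · rintro ⟨hf, hlt⟩
      refine ⟨hf, ?_, ?_⟩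
      · rintro rfl
        rw [eDist_mk, eDist_mk, SimpleGraph.dist_comm (G := C0 n k) (u := t) (v := 0),
          dist_zero' (0 : Fin n), dist_zero' t, dist_tri h h1 h2 t] at hlt
        simp only [Fin.ext_iff, Fin.val_zero, Fin.val_zero, true_or, or_true, if_true] at hlt
        split_ifs at hlt <;> omega
      · rintro rfl
        rw [eDist_mk, eDist_mk, dist_tri h h1 h2 t, dist_tri h b1 b2 t,
          dist_tri h h1 h2 0, dist_tri h b1 b2 0, pa_pa h h1 h2] at hlt
        simp only [Fin.ext_iff, Fin.val_zero, Fin.val_zero, true_or, or_true, if_true] at hlt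
        split_ifs at hlt <;> omega
    · rintro ⟨hf, hne1, hne2⟩
      refine ⟨hf, ?_⟩
      rcases edge_cases h hf with ⟨x, hx, rfl⟩ | ⟨u, hu1, hu2, rfl⟩
      · have hx1 := ne_zero_iff.mp hx
        have hxt : x.val ≠ t.val := fun he => hne1 (by rw [Fin.ext he])
        rw [eDist_mk, eDist_mk, SimpleGraph.dist_comm (G := C0 n k) (u := x) (v := 0),
          SimpleGraph.dist_comm (G := C0 n k) (u := x) (v := t),
          dist_tri h h1 h2 x, dist_zero' t, dist_zero' x, dist_zero' (0 : Fin n)]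
        simp only [Fin.ext_iff, Fin.val_zero, Fin.val_zero, true_or, or_true, if_true]
        split_ifs <;> omega
      · have hu1' : 1 ≤ u.val := by omega
        have hu2' : u.val ≤ 2*k := by omega
        obtain ⟨c1, c2, c3, c4⟩ := pa_bounds h hu1' hu2'
        have k1 : u.val ≠ t.val := fun he => hne2 (by rw [show u = t from Fin.ext he])
        have k2 : (pa u).val ≠ t.val := fun he => hne2 (by
          rw [← show pa u = t from Fin.ext he, pa_pa h hu1' hu2']
          exact Sym2.eq_swap)
        have k3 : u.val ≠ (pa t).val := fun he => hne2 (by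
          rw [show u = pa t from Fin.ext he, pa_pa h h1 h2]
          exact Sym2.eq_swap)
        have k4 : (pa u).val ≠ (pa t).val := fun he => hne2 (by
          have hut : u = t := by
            rw [← pa_pa h hu1' hu2', show pa u = pa t from Fin.ext he, pa_pa h h1 h2]
          rw [hut])
        rw [eDist_mk, eDist_mk, SimpleGraph.dist_comm (G := C0 n k) (u := u) (v := t),
          SimpleGraph.dist_comm (G := C0 n k) (u := pa u) (v := t),
          dist_tri h h1 h2 u, dist_tri h h1 h2 (pa u),
          dist_tri h hu1' hu2' 0, dist_tri h c1 c2 0]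
        simp only [Fin.ext_iff, Fin.val_zero, Fin.val_zero, true_or, or_true, if_true]
        split_ifs <;> omega
  have hmem2 : s(t, pa t) ∈ (C0 n k).edgeSet \ {s((0:Fin n), t)} := by
    refine ⟨tri_mem h h1 h2, ?_⟩
    simp only [Set.mem_singleton_iff]
    intro he
    rcases Sym2.eq_iff.mp he with ⟨he1, -⟩ | ⟨-, he2⟩
    · exact absurd (congrArg Fin.val he1) (by rw [Fin.val_zero]; omega)
    · exact absurd (congrArg Fin.val he2) (by rw [Fin.val_zero]; omega)
  rw [szM, hset, Set.insert_eq, ← Set.diff_diff,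
    Set.ncard_diff_singleton_of_mem hmem2,
    Set.ncard_diff_singleton_of_mem (star_mem ht0), ncard_edgeSet h]
  omega

lemma szM_tri_pa (h : 2*k+1 ≤ n) {t : Fin n} (h1 : 1 ≤ t.val) (h2 : t.val ≤ 2*k) :
    szM (C0 n k) t (pa t) = 1 := by
  obtain ⟨b1, b2, b3, b4⟩ := pa_bounds h h1 h2
  have ht0 : t ≠ 0 := ne_zero_iff.mpr h1
  have hset : {e | e ∈ (C0 n k).edgeSet ∧ eDist (C0 n k) e t < eDist (C0 n k) e (pa t)}
      = {s((0:Fin n), t)} := by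
    ext f
    simp only [Set.mem_setOf_eq, Set.mem_singleton_iff]
    constructor
    · rintro ⟨hf, hlt⟩
      rcases edge_cases h hf with ⟨x, hx, rfl⟩ | ⟨u, hu1, hu2, rfl⟩
      · have hx1 := ne_zero_iff.mp hx
        have key : x.val = t.val := by
          rw [eDist_mk, eDist_mk, SimpleGraph.dist_comm (G := C0 n k) (u := x) (v := t),
            SimpleGraph.dist_comm (G := C0 n k) (u := x) (v := pa t),
            dist_tri h h1 h2 x, dist_tri h b1 b2 x, dist_zero' t, dist_zero' (pa t),
            pa_pa h h1 h2] at hlt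
          simp only [Fin.ext_iff, Fin.val_zero, Fin.val_zero, true_or, or_true, if_true] at hlt
          split_ifs at hlt <;> omega
        rw [show x = t from Fin.ext key]
      · exfalso
        have hu1' : 1 ≤ u.val := by omega
        have hu2' : u.val ≤ 2*k := by omega
        obtain ⟨c1, c2, c3, c4⟩ := pa_bounds h hu1' hu2'
        rw [eDist_mk, eDist_mk, SimpleGraph.dist_comm (G := C0 n k) (u := u) (v := t),
          SimpleGraph.dist_comm (G := C0 n k) (u := pa u) (v := t),
          SimpleGraph.dist_comm (G := C0 n k) (u := u) (v := pa t),
          SimpleGraph.dist_comm (G := C0 n k) (u := pa u) (v := pa t),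
          dist_tri h h1 h2 u, dist_tri h h1 h2 (pa u),
          dist_tri h b1 b2 u, dist_tri h b1 b2 (pa u), pa_pa h h1 h2] at hlt
        simp only [Fin.ext_iff, Fin.val_zero, Fin.val_zero, true_or, or_true, if_true] at hlt
        split_ifs at hlt <;> omega
    · rintro rfl
      refine ⟨star_mem ht0, ?_⟩
      rw [eDist_mk, eDist_mk,
        dist_tri h h1 h2 t, dist_tri h h1 h2 (pa t), dist_zero' t, dist_zero' (pa t)]
      simp only [Fin.ext_iff, Fin.val_zero, Fin.val_zero, true_or, or_true, if_true]
      split_ifs <;> omega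
  rw [szM, hset, Set.ncard_singleton]


lemma inj_star : ∀ x ∈ univ.filter (fun x : Fin n => x ≠ 0),
    ∀ y ∈ univ.filter (fun x : Fin n => x ≠ 0),
    s((0:Fin n), x) = s((0:Fin n), y) → x = y := by
  intro x hx y hy he
  rcases Sym2.eq_iff.mp he with ⟨-, h2⟩ | ⟨h1, -⟩
  · exact h2
  · exact absurd h1.symm (Finset.mem_filter.mp hy).2

lemma inj_tri (h : 2*k+1 ≤ n) :
    ∀ t ∈ univ.filter (fun t : Fin n => t.val % 2 = 1 ∧ t.val < 2*k),
    ∀ u ∈ univ.filter (fun t : Fin n => t.val % 2 = 1 ∧ t.val < 2*k),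
    s(t, pa t) = s(u, pa u) → t = u := by
  intro t ht u hu he
  obtain ⟨-, ht1, ht2⟩ := Finset.mem_filter.mp ht
  obtain ⟨-, hu1, hu2⟩ := Finset.mem_filter.mp hu
  rcases Sym2.eq_iff.mp he with ⟨h1, -⟩ | ⟨h1, -⟩
  · exact h1
  · rcases pa_spec h (t := u) (by omega) (by omega) with ⟨hv, -⟩ | ⟨-, hp⟩
    · exact absurd (congrArg Fin.val h1) (by omega)
    · omega

lemma card_pend_filter : (univ.filter (fun x : Fin n => 2*k+1 ≤ x.val)).card = n - (2*k+1) := by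
  refine (Finset.card_bij' (t := Finset.Ico (2*k+1) n) (fun t _ => t.val)
    (fun m _ => ⟨m % n, Nat.mod_lt _ (NeZero.pos n)⟩) ?_ ?_ ?_ ?_).trans (Nat.card_Ico _ _)
  · intro t ht
    obtain ⟨-, ht1⟩ := Finset.mem_filter.mp ht
    exact Finset.mem_Ico.mpr ⟨ht1, t.isLt⟩
  · intro m hm
    rw [Finset.mem_Ico] at hm
    refine Finset.mem_filter.mpr ⟨mem_univ _, ?_⟩
    show 2*k+1 ≤ m % n
    rw [Nat.mod_eq_of_lt (by omega)]
    omega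
  · intro t ht
    exact Fin.ext (Nat.mod_eq_of_lt t.isLt)
  · intro m hm
    rw [Finset.mem_Ico] at hm
    exact Nat.mod_eq_of_lt (by omega)

lemma card_tri_filter (h : 2*k+1 ≤ n) :
    (univ.filter (fun x : Fin n => 1 ≤ x.val ∧ x.val ≤ 2*k)).card = 2*k := by
  have hb : (univ.filter (fun x : Fin n => 1 ≤ x.val ∧ x.val ≤ 2*k)).card
      = (Finset.Ico 1 (2*k+1)).card := by
    refine Finset.card_bij' (fun t _ => t.val)
      (fun m _ => ⟨m % n, Nat.mod_lt _ (NeZero.pos n)⟩) ?_ ?_ ?_ ?_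
    · intro t ht
      obtain ⟨-, ht1, ht2⟩ := Finset.mem_filter.mp ht
      exact Finset.mem_Ico.mpr ⟨ht1, show t.val < 2*k+1 by omega⟩
    · intro m hm
      rw [Finset.mem_Ico] at hm
      refine Finset.mem_filter.mpr ⟨mem_univ _, ?_⟩
      show 1 ≤ m % n ∧ m % n ≤ 2*k
      rw [Nat.mod_eq_of_lt (by omega)]
      omega
    · intro t ht
      exact Fin.ext (Nat.mod_eq_of_lt t.isLt)
    · intro m hm
      rw [Finset.mem_Ico] at hm
      exact Nat.mod_eq_of_lt (by omega)
  rw [hb, Nat.card_Ico]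
  omega

end Part2

open C0Aux Part2

/-- For integers `n ≥ 2k + 1` and `k ≥ 0`, the edge-vertex Szeged index of
`C₀(n,k)` equals `(1/2)(n² - 3n + 3kn - 5k + 2)`. -/
theorem edge_vertex_szeged_C0 (n k : ℕ) (h : 2*k + 1 ≤ n) (hk : 0 ≤ k) :
    szEV (C0 n k) = (1/2 : ℚ) * ((n : ℚ)^2 - 3*n + 3*k*n - 5*k + 2) := by
  haveI : NeZero n := ⟨by omega⟩
  have hdisj2 : Disjoint (univ.filter fun x : Fin n => 2*k+1 ≤ x.val)
      (univ.filter fun x : Fin n => 1 ≤ x.val ∧ x.val ≤ 2*k) := by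
    rw [Finset.disjoint_left]
    intro a ha hb
    rw [Finset.mem_filter] at ha hb
    omega
  have hsplit : (univ.filter fun x : Fin n => x ≠ 0)
      = (univ.filter fun x : Fin n => 2*k+1 ≤ x.val)
        ∪ (univ.filter fun x : Fin n => 1 ≤ x.val ∧ x.val ≤ 2*k) := by
    ext x
    simp only [Finset.mem_filter, Finset.mem_union, Finset.mem_univ, true_and, ne_eq,
      Fin.ext_iff, Fin.val_zero]
    omega
  rw [szEV, edgeFinset_eq h, Finset.sum_union (disj_star_tri h), Finset.sum_image inj_star,
    Finset.sum_image (inj_tri h), hsplit, Finset.sum_union hdisj2]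
  simp only [Sym2.lift_mk]
  have hval1 : ∀ x ∈ univ.filter (fun x : Fin n => 2*k+1 ≤ x.val),
      ((szN (C0 n k) 0 x * szM (C0 n k) x 0 + szN (C0 n k) x 0 * szM (C0 n k) 0 x : ℕ) : ℚ)
        = ((n - 1 + k - 1 : ℕ) : ℚ) := by
    intro x hx
    obtain ⟨-, hx1⟩ := Finset.mem_filter.mp hx
    rw [szN_z_pend h hx1, szM_pend_z h hx1, szN_pend_z h hx1, szM_z_pend h hx1]
    norm_num
  have hval2 : ∀ x ∈ univ.filter (fun x : Fin n => 1 ≤ x.val ∧ x.val ≤ 2*k),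
      ((szN (C0 n k) 0 x * szM (C0 n k) x 0 + szN (C0 n k) x 0 * szM (C0 n k) 0 x : ℕ) : ℚ)
        = (((n - 2) + (n - 1 + k - 2) : ℕ) : ℚ) := by
    intro x hx
    obtain ⟨-, hx1, hx2⟩ := Finset.mem_filter.mp hx
    rw [szN_z_tri h hx1 hx2, szM_tri_z h hx1 hx2, szN_tri_z h hx1 hx2, szM_z_tri h hx1 hx2]
    norm_num
  have hval3 : ∀ t ∈ univ.filter (fun t : Fin n => t.val % 2 = 1 ∧ t.val < 2*k),
      ((szN (C0 n k) t (pa t) * szM (C0 n k) (pa t) t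
        + szN (C0 n k) (pa t) t * szM (C0 n k) t (pa t) : ℕ) : ℚ) = ((2 : ℕ) : ℚ) := by
    intro t ht
    obtain ⟨-, ht1, ht2⟩ := Finset.mem_filter.mp ht
    have h1 : 1 ≤ t.val := by omega
    have h2 : t.val ≤ 2*k := by omega
    obtain ⟨b1, b2, b3, b4⟩ := pa_bounds h h1 h2
    have e1 := szM_tri_pa h b1 b2
    rw [pa_pa h h1 h2] at e1
    have e2 := szN_tri_pa h b1 b2
    rw [pa_pa h h1 h2] at e2
    rw [szN_tri_pa h h1 h2, szM_tri_pa h h1 h2, e1, e2]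
  rw [Finset.sum_eq_card_nsmul hval1, Finset.sum_eq_card_nsmul hval2,
    Finset.sum_eq_card_nsmul hval3, card_pend_filter, card_tri_filter h, card_odd_filter h,
    nsmul_eq_mul, nsmul_eq_mul, nsmul_eq_mul]
  rcases Nat.eq_zero_or_pos k with rfl | hk1
  · by_cases hn1 : n = 1
    · subst hn1
      norm_num
    · obtain ⟨m, rfl⟩ : ∃ m, n = m + 2 := ⟨n - 2, by omega⟩
      push_cast [Nat.cast_sub (show 2*0+1 ≤ m+2 from by omega),
        Nat.cast_sub (show 1 ≤ m+2 from by omega),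
        Nat.cast_sub (show 1 ≤ m+2-1+0 from by omega),
        Nat.cast_sub (show 2 ≤ m+2 from by omega)]
      ring
  · obtain ⟨m, rfl⟩ : ∃ m, n = m + (2*k+1) := ⟨n - (2*k+1), by omega⟩
    obtain ⟨j, rfl⟩ : ∃ j, k = j + 1 := ⟨k - 1, by omega⟩
    push_cast [Nat.cast_sub (show 2*(j+1)+1 ≤ m+(2*(j+1)+1) from by omega),
      Nat.cast_sub (show 1 ≤ m+(2*(j+1)+1) from by omega),
      Nat.cast_sub (show 1 ≤ m+(2*(j+1)+1)-1+(j+1) from by omega),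
      Nat.cast_sub (show 2 ≤ m+(2*(j+1)+1) from by omega),
      Nat.cast_sub (show 2 ≤ m+(2*(j+1)+1)-1+(j+1) from by omega)]
    ring
end
end
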